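/- arXiv:0806.3898 — 6 statements merged into one kernel-verified Lean document; each statement's English description precedes it below -/
import Mathlib

section
/- Let Θ = ({D_g}, {θ_g}, {w_{g,h}}) be a twisted partial action of a group G on a k-algebra A. Then for all g in G and a in D_{g⁻¹}: θ_g(a · w_{g⁻¹,g}) = θ_g(a) · w_{g,g⁻¹}. -/
/-- The additive subgroup generated by products of elements of `S` and `T`. -/
def setMul {A : Type} [NonUnitalRing A] (S T : AddSubgroup A) : AddSubgroup A :=
  AddSubgroup.closure (Set.image2 (· * ·) (S : Set A) (T : Set A))

/-- A twisted partial action of a group `G` on a (non-necessarily unital)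
`k`-algebra `A` (Definition 2.1 of the paper).  The family `D g` consists of
idempotent, pairwise commuting two-sided ideals, `θ g : D g⁻¹ → D g` are
`k`-algebra isomorphisms (with inverses `θinv g`), and `(wL g h, wR g h)` is an
invertible multiplier of `D g · D (g*h)` (with inverse `(winvL g h, winvR g h)`). -/
structure TwistedPartialAction (k : Type) [CommRing k] (G : Type) [Group G]
    (A : Type) [NonUnitalRing A] [Module k A] where
  D : G → AddSubgroup A
  mul_mem_left : ∀ g (a x : A), x ∈ D g → a * x ∈ D g
  mul_mem_right : ∀ g (a x : A), x ∈ D g → x * a ∈ D g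
  smul_mem : ∀ g (c : k) (x : A), x ∈ D g → c • x ∈ D g
  idem : ∀ g, setMul (D g) (D g) = D g
  commute : ∀ g h, setMul (D g) (D h) = setMul (D h) (D g)
  θ : G → A → A
  θinv : G → A → A
  D_one : D 1 = ⊤
  θ_one : ∀ a : A, θ 1 a = a
  θ_mem : ∀ g a, a ∈ D g⁻¹ → θ g a ∈ D g
  θinv_mem : ∀ g a, a ∈ D g → θinv g a ∈ D g⁻¹
  θ_add : ∀ g a b, a ∈ D g⁻¹ → b ∈ D g⁻¹ → θ g (a + b) = θ g a + θ g b
  θ_smul : ∀ g (c : k) a, a ∈ D g⁻¹ → θ g (c • a) = c • θ g a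
  θ_mul : ∀ g a b, a ∈ D g⁻¹ → b ∈ D g⁻¹ → θ g (a * b) = θ g a * θ g b
  θ_left_inv : ∀ g a, a ∈ D g⁻¹ → θinv g (θ g a) = a
  θ_right_inv : ∀ g a, a ∈ D g → θ g (θinv g a) = a
  θ_image : ∀ g h, θ g '' (setMul (D g⁻¹) (D h) : Set A) = (setMul (D g) (D (g * h)) : Set A)
  wL : G → G → A → A
  wR : G → G → A → A
  winvL : G → G → A → A
  winvR : G → G → A → A
  wL_mem : ∀ g h x, x ∈ setMul (D g) (D (g * h)) → wL g h x ∈ setMul (D g) (D (g * h))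
  wR_mem : ∀ g h x, x ∈ setMul (D g) (D (g * h)) → wR g h x ∈ setMul (D g) (D (g * h))
  winvL_mem : ∀ g h x, x ∈ setMul (D g) (D (g * h)) → winvL g h x ∈ setMul (D g) (D (g * h))
  winvR_mem : ∀ g h x, x ∈ setMul (D g) (D (g * h)) → winvR g h x ∈ setMul (D g) (D (g * h))
  wL_add : ∀ g h x y, x ∈ setMul (D g) (D (g * h)) → y ∈ setMul (D g) (D (g * h)) →
    wL g h (x + y) = wL g h x + wL g h y
  wR_add : ∀ g h x y, x ∈ setMul (D g) (D (g * h)) → y ∈ setMul (D g) (D (g * h)) →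
    wR g h (x + y) = wR g h x + wR g h y
  winvL_add : ∀ g h x y, x ∈ setMul (D g) (D (g * h)) → y ∈ setMul (D g) (D (g * h)) →
    winvL g h (x + y) = winvL g h x + winvL g h y
  winvR_add : ∀ g h x y, x ∈ setMul (D g) (D (g * h)) → y ∈ setMul (D g) (D (g * h)) →
    winvR g h (x + y) = winvR g h x + winvR g h y
  wL_mul : ∀ g h x y, x ∈ setMul (D g) (D (g * h)) → y ∈ setMul (D g) (D (g * h)) →
    wL g h (x * y) = wL g h x * y
  wR_mul : ∀ g h x y, x ∈ setMul (D g) (D (g * h)) → y ∈ setMul (D g) (D (g * h)) →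
    wR g h (x * y) = x * wR g h y
  w_compat : ∀ g h x y, x ∈ setMul (D g) (D (g * h)) → y ∈ setMul (D g) (D (g * h)) →
    wR g h x * y = x * wL g h y
  winvL_mul : ∀ g h x y, x ∈ setMul (D g) (D (g * h)) → y ∈ setMul (D g) (D (g * h)) →
    winvL g h (x * y) = winvL g h x * y
  winvR_mul : ∀ g h x y, x ∈ setMul (D g) (D (g * h)) → y ∈ setMul (D g) (D (g * h)) →
    winvR g h (x * y) = x * winvR g h y
  winv_compat : ∀ g h x y, x ∈ setMul (D g) (D (g * h)) → y ∈ setMul (D g) (D (g * h)) →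
    winvR g h x * y = x * winvL g h y
  wL_inv : ∀ g h x, x ∈ setMul (D g) (D (g * h)) → winvL g h (wL g h x) = x
  wL_inv' : ∀ g h x, x ∈ setMul (D g) (D (g * h)) → wL g h (winvL g h x) = x
  wR_inv : ∀ g h x, x ∈ setMul (D g) (D (g * h)) → winvR g h (wR g h x) = x
  wR_inv' : ∀ g h x, x ∈ setMul (D g) (D (g * h)) → wR g h (winvR g h x) = x
  w_one_left : ∀ g x, x ∈ D g → wL 1 g x = x ∧ wR 1 g x = x
  w_one_right : ∀ g x, x ∈ D g → wL g 1 x = x ∧ wR g 1 x = x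
  θ_comp : ∀ g h a, a ∈ setMul (D h⁻¹) (D (h⁻¹ * g⁻¹)) →
    θ g (θ h a) = winvR g h (wL g h (θ (g * h) a))
  cocycle : ∀ g h t a, a ∈ setMul (setMul (D g⁻¹) (D h)) (D (h * t)) →
    wR g (h * t) (θ g (wR h t a)) = wR (g * h) t (wR g h (θ g a))


lemma setMul_le {A : Type} [NonUnitalRing A] {S T U : AddSubgroup A}
    (h : ∀ s t : A, s ∈ S → t ∈ T → s * t ∈ U) : setMul S T ≤ U := by
  apply AddSubgroup.closure_le U |>.mpr
  rintro x ⟨s, hs, t, ht, rfl⟩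
  exact h s t hs ht

lemma setMul_mono {A : Type} [NonUnitalRing A] {S T T' : AddSubgroup A}
    (h : T ≤ T') : setMul S T ≤ setMul S T' := by
  apply AddSubgroup.closure_mono
  exact Set.image2_subset le_rfl h

lemma TPA_mem_setMul_one {k G A : Type} [CommRing k] [Group G]
    [NonUnitalRing A] [Module k A] (Θ : TwistedPartialAction k G A)
    (g : G) (a : A) (ha : a ∈ Θ.D g) : a ∈ setMul (Θ.D g) (Θ.D 1) := by
  have : a ∈ setMul (Θ.D g) (Θ.D g) := by rw [Θ.idem]; exact ha
  exact setMul_mono (by rw [Θ.D_one]; exact le_top) this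

lemma TPA_setMul_le_left {k G A : Type} [CommRing k] [Group G]
    [NonUnitalRing A] [Module k A] (Θ : TwistedPartialAction k G A)
    (g : G) (T : AddSubgroup A) : setMul (Θ.D g) T ≤ Θ.D g :=
  setMul_le fun s t hs _ => Θ.mul_mem_right g t s hs

/-- for a twisted partial action `Θ` of `G` on `A`,
`θ_g(a · w_{g⁻¹,g}) = θ_g(a) · w_{g,g⁻¹}` for all `g ∈ G`, `a ∈ D_{g⁻¹}`. -/
theorem twistedPartialAction_wR_compat {k G A : Type} [CommRing k] [Group G]
    [NonUnitalRing A] [Module k A]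
    (Θ : TwistedPartialAction k G A) (g : G) (a : A) (ha : a ∈ Θ.D g⁻¹) :
    Θ.θ g (Θ.wR g⁻¹ g a) = Θ.wR g g⁻¹ (Θ.θ g a) := by
  have h1 : a ∈ setMul (Θ.D g⁻¹) (Θ.D (g⁻¹ * g)) := by
    rw [inv_mul_cancel]; exact TPA_mem_setMul_one Θ g⁻¹ a ha
  have h2 : a ∈ setMul (setMul (Θ.D g⁻¹) (Θ.D g⁻¹)) (Θ.D (g⁻¹ * g)) := by
    rw [Θ.idem]; exact h1
  have hw : Θ.wR g⁻¹ g a ∈ Θ.D g⁻¹ :=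
    TPA_setMul_le_left Θ g⁻¹ _ (Θ.wR_mem g⁻¹ g a h1)
  have hθw : Θ.θ g (Θ.wR g⁻¹ g a) ∈ Θ.D g := Θ.θ_mem g _ hw
  have hθa : Θ.θ g a ∈ setMul (Θ.D g) (Θ.D (g * g⁻¹)) := by
    rw [mul_inv_cancel]; exact TPA_mem_setMul_one Θ g _ (Θ.θ_mem g a ha)
  have hwθa : Θ.wR g g⁻¹ (Θ.θ g a) ∈ Θ.D g :=
    TPA_setMul_le_left Θ g _ (Θ.wR_mem g g⁻¹ _ hθa)
  have hc := Θ.cocycle g g⁻¹ g a h2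
  rw [inv_mul_cancel, mul_inv_cancel] at hc
  rw [(Θ.w_one_right g _ hθw).2, (Θ.w_one_left g _ hwθa).2] at hc
  exact hc
end

section
/- Let Θ be a twisted partial action of a group G on a k-algebra A. Then for all g in G and a in D_{g⁻¹}: θ_g(w_{g⁻¹,g} · a) = w_{g,g⁻¹} · θ_g(a). -/
/-- for a twisted partial action `Θ` of `G` on `A`,
`θ_g(w_{g⁻¹,g} · a) = w_{g,g⁻¹} · θ_g(a)` for all `g ∈ G`, `a ∈ D_{g⁻¹}`. -/
theorem twistedPartialAction_wL_compat {k G A : Type} [CommRing k] [Group G]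
    [NonUnitalRing A] [Module k A]
    (Θ : TwistedPartialAction k G A) (g : G) (a : A) (ha : a ∈ Θ.D g⁻¹) :
    Θ.θ g (Θ.wL g⁻¹ g a) = Θ.wL g g⁻¹ (Θ.θ g a) := by
  have hgg : g⁻¹ * g = 1 := inv_mul_cancel g
  have hgg' : g * g⁻¹ = 1 := mul_inv_cancel g
  -- setMul (D s) (D 1) = D s (both directions as membership facts)
  have hle : ∀ s : G, setMul (Θ.D s) (Θ.D 1) ≤ Θ.D s := by
    intro s
    refine (AddSubgroup.closure_le _).mpr ?_
    rintro x ⟨u, hu, v, hv, rfl⟩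
    exact Θ.mul_mem_right s v u hu
  have hmem : ∀ (s : G) (x : A), x ∈ Θ.D s → x ∈ setMul (Θ.D s) (Θ.D 1) := by
    intro s x hx
    have hx' : x ∈ setMul (Θ.D s) (Θ.D s) := by rw [Θ.idem]; exact hx
    refine AddSubgroup.closure_mono ?_ hx'
    exact Set.image2_subset subset_rfl (by rw [Θ.D_one]; exact fun y _ => trivial)
  have ha1 : a ∈ setMul (Θ.D g⁻¹) (Θ.D (g⁻¹ * g)) := by
    rw [hgg]; exact hmem _ a ha
  have hwLa : Θ.wL g⁻¹ g a ∈ setMul (Θ.D g⁻¹) (Θ.D (g⁻¹ * g)) := Θ.wL_mem _ _ _ ha1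
  set a' := Θ.winvR g⁻¹ g (Θ.wL g⁻¹ g a) with ha'def
  have ha'mem : a' ∈ setMul (Θ.D g⁻¹) (Θ.D (g⁻¹ * g)) := Θ.winvR_mem _ _ _ hwLa
  have ha'D : a' ∈ Θ.D g⁻¹ := by
    have := ha'mem; rw [hgg] at this; exact hle _ this
  -- step 1: θ_{g⁻¹}(θ_g a) = a'
  have h1 : Θ.θ g⁻¹ (Θ.θ g a) = a' := by
    have hc := Θ.θ_comp g⁻¹ g a (by simpa [hgg] using ha1)
    rw [hgg, Θ.θ_one] at hc
    exact hc
  -- step 2: θ_g a' = winvR g g⁻¹ (wL g g⁻¹ (θ_g a))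
  have hθa : Θ.θ g a ∈ Θ.D g := Θ.θ_mem g a ha
  have hθa1 : Θ.θ g a ∈ setMul (Θ.D g) (Θ.D (g * g⁻¹)) := by
    rw [hgg']; exact hmem _ _ hθa
  have h2 : Θ.θ g a' = Θ.winvR g g⁻¹ (Θ.wL g g⁻¹ (Θ.θ g a)) := by
    have hc := Θ.θ_comp g g⁻¹ (Θ.θ g a) (by simpa [hgg'] using hθa1)
    rw [hgg', Θ.θ_one, h1] at hc
    exact hc
  -- hence wR g g⁻¹ (θ_g a') = wL g g⁻¹ (θ_g a)
  have hwL_mem : Θ.wL g g⁻¹ (Θ.θ g a) ∈ setMul (Θ.D g) (Θ.D (g * g⁻¹)) :=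
    Θ.wL_mem _ _ _ hθa1
  have h3 : Θ.wR g g⁻¹ (Θ.θ g a') = Θ.wL g g⁻¹ (Θ.θ g a) := by
    rw [h2]; exact Θ.wR_inv' _ _ _ hwL_mem
  -- step 3: cocycle at (g, g⁻¹, g) applied to a'
  have ha'mem2 : a' ∈ setMul (setMul (Θ.D g⁻¹) (Θ.D g⁻¹)) (Θ.D (g⁻¹ * g)) := by
    rw [Θ.idem]; exact ha'mem
  have hco := Θ.cocycle g g⁻¹ g a' ha'mem2
  have hwRa' : Θ.wR g⁻¹ g a' = Θ.wL g⁻¹ g a := Θ.wR_inv' _ _ _ hwLa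
  rw [hwRa', hgg, hgg'] at hco
  -- strip the trivial multipliers on both sides
  have hLHSmem : Θ.θ g (Θ.wL g⁻¹ g a) ∈ Θ.D g := by
    refine Θ.θ_mem g _ ?_
    have := hwLa; rw [hgg] at this; exact hle _ this
  have hRHSmem : Θ.wR g g⁻¹ (Θ.θ g a') ∈ Θ.D g := by
    have : Θ.θ g a' ∈ setMul (Θ.D g) (Θ.D (g * g⁻¹)) := by
      rw [hgg']; exact hmem _ _ (Θ.θ_mem g a' ha'D)
    have h5 := Θ.wR_mem g g⁻¹ _ this
    rw [hgg'] at h5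
    exact hle _ h5
  rw [(Θ.w_one_right g _ hLHSmem).2, (Θ.w_one_left g _ hRHSmem).2] at hco
  rw [hco, h3]
end

section
/- Let Θ be a twisted partial action of a group G on a k-algebra A over a commutative unital ring k. Then the crossed product A ⋊_Θ G = ⊕_{g∈G} D_g δ_g, with multiplication (a_g δ_g)·(b_h δ_h) = θ_g(θ_g⁻¹(a_g)·b_h)·w_{g,h} δ_{gh}, is an associative k-algebra. -/
/-- The product of the monomials `a δ_g` and `b δ_h` in the crossed product
`A ⋊_Θ G`: `(a δ_g)·(b δ_h) = θ_g(θ_g⁻¹(a)·b)·w_{g,h} δ_{gh}`. -/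
def crossedMul {k G A : Type} [CommRing k] [Group G] [NonUnitalRing A] [Module k A]
    (Θ : TwistedPartialAction k G A) (g h : G) (a b : A) : A :=
  Θ.wR g h (Θ.θ g (Θ.θinv g a * b))


section Helpers

lemma setMul_ind {A : Type} [NonUnitalRing A] {S T : AddSubgroup A} {P : A → Prop}
    (h0 : P 0) (hadd : ∀ x y, P x → P y → P (x + y)) (hneg : ∀ x, P x → P (-x))
    (hgen : ∀ s ∈ S, ∀ t ∈ T, P (s * t)) : ∀ x ∈ setMul S T, P x := by
  intro x hx
  refine AddSubgroup.closure_induction (p := fun x _ => P x) ?_ h0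
    (fun x y _ _ hx hy => hadd x y hx hy) (fun x _ hx => hneg x hx) hx
  rintro x ⟨s, hs, t, ht, rfl⟩
  exact hgen s hs t ht

lemma mapAddOn_zero {A : Type} [NonUnitalRing A] {S : AddSubgroup A} {f : A → A}
    (hf : ∀ x y, x ∈ S → y ∈ S → f (x + y) = f x + f y) : f 0 = 0 := by
  have h := hf 0 0 (zero_mem S) (zero_mem S)
  rw [add_zero] at h
  exact left_eq_add.mp h

lemma mapAddOn_neg {A : Type} [NonUnitalRing A] {S : AddSubgroup A} {f : A → A}
    (hf : ∀ x y, x ∈ S → y ∈ S → f (x + y) = f x + f y) {x : A} (hx : x ∈ S) :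
    f (-x) = -f x := by
  have h := hf x (-x) hx (neg_mem hx)
  rw [add_neg_cancel, mapAddOn_zero hf] at h
  exact eq_neg_of_add_eq_zero_right h.symm

variable {k G A : Type} [CommRing k] [Group G] [NonUnitalRing A] [Module k A]
  (Θ : TwistedPartialAction k G A)

lemma memD_left {g h : G} {x : A} (hx : x ∈ setMul (Θ.D g) (Θ.D h)) : x ∈ Θ.D g := by
  refine setMul_ind (zero_mem _) (fun x y => add_mem) (fun x => neg_mem) ?_ x hx
  intro s hs t ht
  exact Θ.mul_mem_right g t s hs

lemma memD_right {g h : G} {x : A} (hx : x ∈ setMul (Θ.D g) (Θ.D h)) : x ∈ Θ.D h := by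
  refine setMul_ind (zero_mem _) (fun x y => add_mem) (fun x => neg_mem) ?_ x hx
  intro s hs t ht
  exact Θ.mul_mem_left h s t ht

lemma mul_mem_setMul_left (g h : G) (r : A) {x : A} (hx : x ∈ setMul (Θ.D g) (Θ.D h)) :
    r * x ∈ setMul (Θ.D g) (Θ.D h) := by
  refine setMul_ind (P := fun x => r * x ∈ setMul (Θ.D g) (Θ.D h)) ?_ ?_ ?_ ?_ x hx
  · rw [mul_zero]; exact zero_mem _
  · intro x y hx hy; rw [mul_add]; exact add_mem hx hy
  · intro x hx; rw [mul_neg]; exact neg_mem hx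
  · intro s hs t ht
    rw [← mul_assoc]
    exact AddSubgroup.subset_closure (Set.mem_image2_of_mem (Θ.mul_mem_left g r s hs) ht)

lemma mul_mem_setMul_right (g h : G) (r : A) {x : A} (hx : x ∈ setMul (Θ.D g) (Θ.D h)) :
    x * r ∈ setMul (Θ.D g) (Θ.D h) := by
  refine setMul_ind (P := fun x => x * r ∈ setMul (Θ.D g) (Θ.D h)) ?_ ?_ ?_ ?_ x hx
  · rw [zero_mul]; exact zero_mem _
  · intro x y hx hy; rw [add_mul]; exact add_mem hx hy
  · intro x hx; rw [neg_mul]; exact neg_mem hx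
  · intro s hs t ht
    rw [mul_assoc]
    exact AddSubgroup.subset_closure (Set.mem_image2_of_mem hs (Θ.mul_mem_right h r t ht))

lemma setMul_stepA (g h : G) : ∀ x ∈ setMul (Θ.D g) (Θ.D h),
    x ∈ setMul (Θ.D g) (setMul (Θ.D g) (Θ.D h)) := by
  refine setMul_ind (zero_mem _) (fun x y => add_mem) (fun x => neg_mem) ?_
  intro s hs t ht
  have hs' : s ∈ setMul (Θ.D g) (Θ.D g) := by rw [Θ.idem g]; exact hs
  refine setMul_ind (P := fun s => s * t ∈ setMul (Θ.D g) (setMul (Θ.D g) (Θ.D h)))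
    ?_ ?_ ?_ ?_ s hs'
  · rw [zero_mul]; exact zero_mem _
  · intro x y hx hy; rw [add_mul]; exact add_mem hx hy
  · intro x hx; rw [neg_mul]; exact neg_mem hx
  · intro s1 hs1 s2 hs2
    rw [mul_assoc]
    exact AddSubgroup.subset_closure (Set.mem_image2_of_mem hs1
      (AddSubgroup.subset_closure (Set.mem_image2_of_mem hs2 ht)))

lemma setMul_stepB (g h : G) : ∀ x ∈ setMul (Θ.D g) (Θ.D h),
    x ∈ setMul (Θ.D h) (setMul (Θ.D g) (Θ.D h)) := by
  intro x hx
  rw [Θ.commute] at hx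
  refine setMul_ind (zero_mem _) (fun x y => add_mem) (fun x => neg_mem) ?_ x hx
  intro t ht s hs
  have ht' : t ∈ setMul (Θ.D h) (Θ.D h) := by rw [Θ.idem h]; exact ht
  refine setMul_ind (P := fun t => t * s ∈ setMul (Θ.D h) (setMul (Θ.D g) (Θ.D h)))
    ?_ ?_ ?_ ?_ t ht'
  · rw [zero_mul]; exact zero_mem _
  · intro x y hx hy; rw [add_mul]; exact add_mem hx hy
  · intro x hx; rw [neg_mul]; exact neg_mem hx
  · intro t1 ht1 t2 ht2
    rw [mul_assoc]
    have h2 : t2 * s ∈ setMul (Θ.D g) (Θ.D h) := by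
      rw [Θ.commute]
      exact AddSubgroup.subset_closure (Set.mem_image2_of_mem ht2 hs)
    exact AddSubgroup.subset_closure (Set.mem_image2_of_mem ht1 h2)

lemma setMul_sq (g h : G) : ∀ x ∈ setMul (Θ.D g) (Θ.D h),
    x ∈ setMul (setMul (Θ.D g) (Θ.D h)) (setMul (Θ.D g) (Θ.D h)) := by
  intro x hx
  have hx1 := setMul_stepA Θ g h x hx
  refine setMul_ind (zero_mem _) (fun x y => add_mem) (fun x => neg_mem) ?_ x hx1
  intro s hs m hm
  have hm1 := setMul_stepB Θ g h m hm
  refine setMul_ind (P := fun m => s * m ∈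
      setMul (setMul (Θ.D g) (Θ.D h)) (setMul (Θ.D g) (Θ.D h))) ?_ ?_ ?_ ?_ m hm1
  · rw [mul_zero]; exact zero_mem _
  · intro x y hx hy; rw [mul_add]; exact add_mem hx hy
  · intro x hx; rw [mul_neg]; exact neg_mem hx
  · intro t ht p hp
    rw [← mul_assoc]
    exact AddSubgroup.subset_closure (Set.mem_image2_of_mem
      (AddSubgroup.subset_closure (Set.mem_image2_of_mem hs ht)) hp)

/-! ### θ lemmas -/

lemma θ_zero (g : G) : Θ.θ g 0 = 0 := mapAddOn_zero (Θ.θ_add g)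

lemma θ_neg (g : G) {x : A} (hx : x ∈ Θ.D g⁻¹) : Θ.θ g (-x) = -Θ.θ g x :=
  mapAddOn_neg (Θ.θ_add g) hx

lemma θ_inj (g : G) {x y : A} (hx : x ∈ Θ.D g⁻¹) (hy : y ∈ Θ.D g⁻¹)
    (h : Θ.θ g x = Θ.θ g y) : x = y := by
  rw [← Θ.θ_left_inv g x hx, h, Θ.θ_left_inv g y hy]

lemma θinv_zero (g : G) : Θ.θinv g 0 = 0 := by
  apply θ_inj Θ g (Θ.θinv_mem g 0 (zero_mem _)) (zero_mem _)
  rw [Θ.θ_right_inv g 0 (zero_mem _), θ_zero Θ g]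

lemma θinv_add (g : G) : ∀ x y, x ∈ Θ.D g → y ∈ Θ.D g →
    Θ.θinv g (x + y) = Θ.θinv g x + Θ.θinv g y := by
  intro x y hx hy
  have hix := Θ.θinv_mem g x hx
  have hiy := Θ.θinv_mem g y hy
  apply θ_inj Θ g (Θ.θinv_mem g _ (add_mem hx hy)) (add_mem hix hiy)
  rw [Θ.θ_right_inv g _ (add_mem hx hy), Θ.θ_add g _ _ hix hiy,
    Θ.θ_right_inv g x hx, Θ.θ_right_inv g y hy]

lemma θinv_neg (g : G) {x : A} (hx : x ∈ Θ.D g) : Θ.θinv g (-x) = -Θ.θinv g x :=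
  mapAddOn_neg (θinv_add Θ g) hx

lemma θinv_mul (g : G) {x y : A} (hx : x ∈ Θ.D g) (hy : y ∈ Θ.D g) :
    Θ.θinv g (x * y) = Θ.θinv g x * Θ.θinv g y := by
  have hix := Θ.θinv_mem g x hx
  have hiy := Θ.θinv_mem g y hy
  apply θ_inj Θ g (Θ.θinv_mem g _ (Θ.mul_mem_left g x y hy))
    (Θ.mul_mem_left g⁻¹ _ _ hiy)
  rw [Θ.θ_right_inv g _ (Θ.mul_mem_left g x y hy), Θ.θ_mul g _ _ hix hiy,
    Θ.θ_right_inv g x hx, Θ.θ_right_inv g y hy]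

lemma θ_image_mem {g s : G} {x : A} (hx : x ∈ setMul (Θ.D g⁻¹) (Θ.D s)) :
    Θ.θ g x ∈ setMul (Θ.D g) (Θ.D (g * s)) := by
  have h := Θ.θ_image g s
  have h2 : Θ.θ g x ∈ Θ.θ g '' (setMul (Θ.D g⁻¹) (Θ.D s) : Set A) :=
    Set.mem_image_of_mem _ hx
  rw [h] at h2
  exact h2

lemma θinv_image_mem {g s : G} {x : A} (hx : x ∈ setMul (Θ.D g) (Θ.D (g * s))) :
    Θ.θinv g x ∈ setMul (Θ.D g⁻¹) (Θ.D s) := by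
  have h := Θ.θ_image g s
  have hx' : x ∈ Θ.θ g '' (setMul (Θ.D g⁻¹) (Θ.D s) : Set A) := by rw [h]; exact hx
  obtain ⟨w, hw, rfl⟩ := hx'
  rw [Θ.θ_left_inv g w (memD_left Θ hw)]
  exact hw

lemma y_to_E {g h : G} {y : A} (hy : y ∈ setMul (Θ.D h⁻¹) (Θ.D (h⁻¹ * g⁻¹))) :
    Θ.θ (g * h) y ∈ setMul (Θ.D g) (Θ.D (g * h)) := by
  rw [Θ.commute] at hy
  rw [← mul_inv_rev] at hy
  have h1 := θ_image_mem Θ (g := g * h) (s := h⁻¹) hy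
  rw [mul_inv_cancel_right] at h1
  rw [Θ.commute]
  exact h1

/-! ### multiplier extension lemmas -/

lemma mulR_ext (g h : G) {R : A → A}
    (Radd : ∀ x y, x ∈ setMul (Θ.D g) (Θ.D (g * h)) → y ∈ setMul (Θ.D g) (Θ.D (g * h)) →
      R (x + y) = R x + R y)
    (Rmul : ∀ x y, x ∈ setMul (Θ.D g) (Θ.D (g * h)) → y ∈ setMul (Θ.D g) (Θ.D (g * h)) →
      R (x * y) = x * R y)
    {x : A} (hx : x ∈ setMul (Θ.D g) (Θ.D (g * h))) (r : A) : r * R x = R (r * x) := by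
  have key : ∀ x ∈ setMul (setMul (Θ.D g) (Θ.D (g * h))) (setMul (Θ.D g) (Θ.D (g * h))),
      x ∈ setMul (Θ.D g) (Θ.D (g * h)) ∧ ∀ r : A, r * R x = R (r * x) := by
    refine setMul_ind ?_ ?_ ?_ ?_
    · refine ⟨zero_mem _, fun r => ?_⟩
      rw [mapAddOn_zero Radd, mul_zero, mapAddOn_zero Radd]
    · rintro x y ⟨hx, ihx⟩ ⟨hy, ihy⟩
      refine ⟨add_mem hx hy, fun r => ?_⟩
      rw [Radd x y hx hy, mul_add, ihx r, ihy r,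
        ← Radd _ _ (mul_mem_setMul_left Θ g (g * h) r hx) (mul_mem_setMul_left Θ g (g * h) r hy),
        mul_add]
    · rintro x ⟨hx, ihx⟩
      refine ⟨neg_mem hx, fun r => ?_⟩
      rw [mapAddOn_neg Radd hx, mul_neg, ihx r,
        ← mapAddOn_neg Radd (mul_mem_setMul_left Θ g (g * h) r hx), mul_neg]
    · intro p hp q hq
      refine ⟨mul_mem_setMul_left Θ g (g * h) p hq, fun r => ?_⟩
      rw [Rmul p q hp hq, ← mul_assoc,
        ← Rmul (r * p) q (mul_mem_setMul_left Θ g (g * h) r hp) hq, mul_assoc]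
  exact (key x (setMul_sq Θ g (g * h) x hx)).2 r

lemma mulL_ext (g h : G) {L : A → A}
    (Ladd : ∀ x y, x ∈ setMul (Θ.D g) (Θ.D (g * h)) → y ∈ setMul (Θ.D g) (Θ.D (g * h)) →
      L (x + y) = L x + L y)
    (Lmul : ∀ x y, x ∈ setMul (Θ.D g) (Θ.D (g * h)) → y ∈ setMul (Θ.D g) (Θ.D (g * h)) →
      L (x * y) = L x * y)
    {x : A} (hx : x ∈ setMul (Θ.D g) (Θ.D (g * h))) (r : A) : L x * r = L (x * r) := by
  have key : ∀ x ∈ setMul (setMul (Θ.D g) (Θ.D (g * h))) (setMul (Θ.D g) (Θ.D (g * h))),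
      x ∈ setMul (Θ.D g) (Θ.D (g * h)) ∧ ∀ r : A, L x * r = L (x * r) := by
    refine setMul_ind ?_ ?_ ?_ ?_
    · refine ⟨zero_mem _, fun r => ?_⟩
      rw [mapAddOn_zero Ladd, zero_mul, mapAddOn_zero Ladd]
    · rintro x y ⟨hx, ihx⟩ ⟨hy, ihy⟩
      refine ⟨add_mem hx hy, fun r => ?_⟩
      rw [Ladd x y hx hy, add_mul, ihx r, ihy r,
        ← Ladd _ _ (mul_mem_setMul_right Θ g (g * h) r hx) (mul_mem_setMul_right Θ g (g * h) r hy),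
        add_mul]
    · rintro x ⟨hx, ihx⟩
      refine ⟨neg_mem hx, fun r => ?_⟩
      rw [mapAddOn_neg Ladd hx, neg_mul, ihx r,
        ← mapAddOn_neg Ladd (mul_mem_setMul_right Θ g (g * h) r hx), neg_mul]
    · intro p hp q hq
      refine ⟨mul_mem_setMul_left Θ g (g * h) p hq, fun r => ?_⟩
      rw [Lmul p q hp hq, mul_assoc,
        ← Lmul p (q * r) hp (mul_mem_setMul_right Θ g (g * h) r hq), mul_assoc]
  exact (key x (setMul_sq Θ g (g * h) x hx)).2 r

lemma F_mem (g h t : G) {r x : A} (hr : r ∈ Θ.D g⁻¹)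
    (hx : x ∈ setMul (Θ.D h) (Θ.D (h * t))) :
    r * x ∈ setMul (setMul (Θ.D g⁻¹) (Θ.D h)) (Θ.D (h * t)) := by
  refine setMul_ind (P := fun x => r * x ∈ setMul (setMul (Θ.D g⁻¹) (Θ.D h)) (Θ.D (h * t)))
    ?_ ?_ ?_ ?_ x hx
  · rw [mul_zero]; exact zero_mem _
  · intro x y hx hy; rw [mul_add]; exact add_mem hx hy
  · intro x hx; rw [mul_neg]; exact neg_mem hx
  · intro p hp q hq
    rw [← mul_assoc]
    exact AddSubgroup.subset_closure (Set.mem_image2_of_mem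
      (AddSubgroup.subset_closure (Set.mem_image2_of_mem hr hp)) hq)

/-! ### Φ lemmas -/

lemma Phi_lin (p : G) (c : A) {x : A} (hx : x ∈ Θ.D p) (r : A) :
    Θ.θ p (Θ.θinv p (r * x) * c) = r * Θ.θ p (Θ.θinv p x * c) := by
  have hx' : x ∈ setMul (Θ.D p) (Θ.D p) := by rw [Θ.idem p]; exact hx
  have key : ∀ x ∈ setMul (Θ.D p) (Θ.D p), x ∈ Θ.D p ∧ ∀ r : A,
      Θ.θ p (Θ.θinv p (r * x) * c) = r * Θ.θ p (Θ.θinv p x * c) := by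
    refine setMul_ind ?_ ?_ ?_ ?_
    · refine ⟨zero_mem _, fun r => ?_⟩
      rw [mul_zero, θinv_zero Θ p, zero_mul, θ_zero Θ p, mul_zero]
    · rintro x y ⟨hx, ihx⟩ ⟨hy, ihy⟩
      refine ⟨add_mem hx hy, fun r => ?_⟩
      have hPhiadd : ∀ z w : A, z ∈ Θ.D p → w ∈ Θ.D p →
          Θ.θ p (Θ.θinv p (z + w) * c) = Θ.θ p (Θ.θinv p z * c) + Θ.θ p (Θ.θinv p w * c) := by
        intro z w hz hw
        rw [θinv_add Θ p z w hz hw, add_mul, Θ.θ_add p _ _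
          (Θ.mul_mem_right p⁻¹ c _ (Θ.θinv_mem p z hz))
          (Θ.mul_mem_right p⁻¹ c _ (Θ.θinv_mem p w hw))]
      rw [mul_add, hPhiadd _ _ (Θ.mul_mem_left p r x hx) (Θ.mul_mem_left p r y hy),
        ihx r, ihy r, hPhiadd _ _ hx hy, mul_add]
    · rintro x ⟨hx, ihx⟩
      refine ⟨neg_mem hx, fun r => ?_⟩
      have hPhineg : ∀ z : A, z ∈ Θ.D p →
          Θ.θ p (Θ.θinv p (-z) * c) = -Θ.θ p (Θ.θinv p z * c) := by
        intro z hz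
        rw [θinv_neg Θ p hz, neg_mul, θ_neg Θ p (Θ.mul_mem_right p⁻¹ c _ (Θ.θinv_mem p z hz))]
      rw [mul_neg, hPhineg _ (Θ.mul_mem_left p r x hx), ihx r, hPhineg _ hx, mul_neg]
    · intro q1 hq1 q2 hq2
      have key2 : ∀ s : A, s ∈ Θ.D p →
          Θ.θ p (Θ.θinv p (s * q2) * c) = s * Θ.θ p (Θ.θinv p q2 * c) := by
        intro s hs
        rw [θinv_mul Θ p hs hq2, mul_assoc, Θ.θ_mul p _ _ (Θ.θinv_mem p s hs)
          (Θ.mul_mem_right p⁻¹ c _ (Θ.θinv_mem p q2 hq2)), Θ.θ_right_inv p s hs]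
      refine ⟨Θ.mul_mem_left p q1 q2 hq2, fun r => ?_⟩
      rw [← mul_assoc, key2 _ (Θ.mul_mem_left p r q1 hq1), key2 _ hq1, mul_assoc]
  exact (key x hx').2 r

lemma Phi_wL (g h : G) (c : A) {x : A} (hx : x ∈ setMul (Θ.D g) (Θ.D (g * h))) :
    Θ.θ (g * h) (Θ.θinv (g * h) x * c) ∈ setMul (Θ.D g) (Θ.D (g * h)) ∧
    Θ.θ (g * h) (Θ.θinv (g * h) (Θ.wL g h x) * c) =
      Θ.wL g h (Θ.θ (g * h) (Θ.θinv (g * h) x * c)) := by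
  have hPhiadd : ∀ z w : A, z ∈ Θ.D (g * h) → w ∈ Θ.D (g * h) →
      Θ.θ (g * h) (Θ.θinv (g * h) (z + w) * c) =
        Θ.θ (g * h) (Θ.θinv (g * h) z * c) + Θ.θ (g * h) (Θ.θinv (g * h) w * c) := by
    intro z w hz hw
    rw [θinv_add Θ (g * h) z w hz hw, add_mul, Θ.θ_add (g * h) _ _
      (Θ.mul_mem_right (g * h)⁻¹ c _ (Θ.θinv_mem (g * h) z hz))
      (Θ.mul_mem_right (g * h)⁻¹ c _ (Θ.θinv_mem (g * h) w hw))]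
  have hPhineg : ∀ z : A, z ∈ Θ.D (g * h) →
      Θ.θ (g * h) (Θ.θinv (g * h) (-z) * c) = -Θ.θ (g * h) (Θ.θinv (g * h) z * c) := by
    intro z hz
    rw [θinv_neg Θ (g * h) hz, neg_mul,
      θ_neg Θ (g * h) (Θ.mul_mem_right (g * h)⁻¹ c _ (Θ.θinv_mem (g * h) z hz))]
  have hPhizero : Θ.θ (g * h) (Θ.θinv (g * h) (0 : A) * c) = 0 := by
    rw [θinv_zero Θ (g * h), zero_mul, θ_zero Θ (g * h)]
  have hwLzero : Θ.wL g h (0 : A) = 0 := mapAddOn_zero (Θ.wL_add g h)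
  have key : ∀ x ∈ setMul (setMul (Θ.D g) (Θ.D (g * h))) (setMul (Θ.D g) (Θ.D (g * h))),
      x ∈ setMul (Θ.D g) (Θ.D (g * h)) ∧
      Θ.θ (g * h) (Θ.θinv (g * h) x * c) ∈ setMul (Θ.D g) (Θ.D (g * h)) ∧
      Θ.θ (g * h) (Θ.θinv (g * h) (Θ.wL g h x) * c) =
        Θ.wL g h (Θ.θ (g * h) (Θ.θinv (g * h) x * c)) := by
    refine setMul_ind ?_ ?_ ?_ ?_
    · refine ⟨zero_mem _, ?_, ?_⟩
      · rw [hPhizero]; exact zero_mem _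
      · rw [hwLzero, hPhizero, hwLzero]
    · rintro x y ⟨hx, hPx, ihx⟩ ⟨hy, hPy, ihy⟩
      refine ⟨add_mem hx hy, ?_, ?_⟩
      · rw [hPhiadd x y (memD_right Θ hx) (memD_right Θ hy)]
        exact add_mem hPx hPy
      · rw [Θ.wL_add g h x y hx hy,
          hPhiadd _ _ (memD_right Θ (Θ.wL_mem g h x hx)) (memD_right Θ (Θ.wL_mem g h y hy)),
          ihx, ihy, ← Θ.wL_add g h _ _ hPx hPy,
          ← hPhiadd x y (memD_right Θ hx) (memD_right Θ hy)]
    · rintro x ⟨hx, hPx, ihx⟩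
      refine ⟨neg_mem hx, ?_, ?_⟩
      · rw [hPhineg x (memD_right Θ hx)]
        exact neg_mem hPx
      · rw [mapAddOn_neg (Θ.wL_add g h) hx,
          hPhineg _ (memD_right Θ (Θ.wL_mem g h x hx)), ihx,
          ← mapAddOn_neg (Θ.wL_add g h) hPx, ← hPhineg x (memD_right Θ hx)]
    · intro p hp q hq
      have hqD : q ∈ Θ.D (g * h) := memD_right Θ hq
      refine ⟨mul_mem_setMul_left Θ g (g * h) p hq, ?_, ?_⟩
      · rw [Phi_lin Θ (g * h) c hqD p]
        exact mul_mem_setMul_right Θ g (g * h) _ hp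
      · rw [Θ.wL_mul g h p q hp hq, Phi_lin Θ (g * h) c hqD (Θ.wL g h p),
          Phi_lin Θ (g * h) c hqD p]
        exact mulL_ext Θ g h (Θ.wL_add g h) (Θ.wL_mul g h) hp _
  have h2 := key x (setMul_sq Θ g (g * h) x hx)
  exact ⟨h2.2.1, h2.2.2⟩

/-! ### crossedMul lemmas -/

lemma inner_memE {g h : G} {a b : A} (ha : a ∈ Θ.D g) (hb : b ∈ Θ.D h) :
    Θ.θ g (Θ.θinv g a * b) ∈ setMul (Θ.D g) (Θ.D (g * h)) :=
  θ_image_mem Θ (AddSubgroup.subset_closure (Set.mem_image2_of_mem (Θ.θinv_mem g a ha) hb))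

lemma crossedMul_memE {g h : G} {a b : A} (ha : a ∈ Θ.D g) (hb : b ∈ Θ.D h) :
    crossedMul Θ g h a b ∈ setMul (Θ.D g) (Θ.D (g * h)) :=
  Θ.wR_mem g h _ (inner_memE Θ ha hb)

lemma crossedMul_memD {g h : G} {a b : A} (ha : a ∈ Θ.D g) (hb : b ∈ Θ.D h) :
    crossedMul Θ g h a b ∈ Θ.D (g * h) :=
  memD_right Θ (crossedMul_memE Θ ha hb)

lemma crossedMul_zero_left (g h : G) (b : A) : crossedMul Θ g h 0 b = 0 := by
  unfold crossedMul
  rw [θinv_zero Θ g, zero_mul, θ_zero Θ g, mapAddOn_zero (Θ.wR_add g h)]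

lemma crossedMul_zero_right (g h : G) (a : A) : crossedMul Θ g h a 0 = 0 := by
  unfold crossedMul
  rw [mul_zero, θ_zero Θ g, mapAddOn_zero (Θ.wR_add g h)]

lemma crossedMul_add_left {g h : G} {x y b : A} (hx : x ∈ Θ.D g) (hy : y ∈ Θ.D g)
    (hb : b ∈ Θ.D h) :
    crossedMul Θ g h (x + y) b = crossedMul Θ g h x b + crossedMul Θ g h y b := by
  unfold crossedMul
  rw [θinv_add Θ g x y hx hy, add_mul, Θ.θ_add g _ _
      (Θ.mul_mem_right g⁻¹ b _ (Θ.θinv_mem g x hx))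
      (Θ.mul_mem_right g⁻¹ b _ (Θ.θinv_mem g y hy)),
    Θ.wR_add g h _ _ (inner_memE Θ hx hb) (inner_memE Θ hy hb)]

lemma crossedMul_add_right {g h : G} {a x y : A} (ha : a ∈ Θ.D g) (hx : x ∈ Θ.D h)
    (hy : y ∈ Θ.D h) :
    crossedMul Θ g h a (x + y) = crossedMul Θ g h a x + crossedMul Θ g h a y := by
  unfold crossedMul
  rw [mul_add, Θ.θ_add g _ _
      (Θ.mul_mem_right g⁻¹ x _ (Θ.θinv_mem g a ha))
      (Θ.mul_mem_right g⁻¹ y _ (Θ.θinv_mem g a ha)),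
    Θ.wR_add g h _ _ (inner_memE Θ ha hx) (inner_memE Θ ha hy)]

lemma crossedMul_neg_left {g h : G} {x b : A} (hx : x ∈ Θ.D g) (hb : b ∈ Θ.D h) :
    crossedMul Θ g h (-x) b = -crossedMul Θ g h x b := by
  have h1 := crossedMul_add_left Θ hx (neg_mem hx) hb
  rw [add_neg_cancel, crossedMul_zero_left Θ g h b] at h1
  exact eq_neg_of_add_eq_zero_right h1.symm

lemma crossedMul_neg_right {g h : G} {a x : A} (ha : a ∈ Θ.D g) (hx : x ∈ Θ.D h) :
    crossedMul Θ g h a (-x) = -crossedMul Θ g h a x := by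
  have h1 := crossedMul_add_right Θ ha hx (neg_mem hx)
  rw [add_neg_cancel, crossedMul_zero_right Θ g h a] at h1
  exact eq_neg_of_add_eq_zero_right h1.symm

/-! ### the core computation -/

lemma core' (g h t : G) (u1 u2 b1 v2 c : A)
    (hu1 : u1 ∈ Θ.D g⁻¹) (hu2 : u2 ∈ Θ.D g⁻¹) (hb1 : b1 ∈ Θ.D h)
    (hv2 : v2 ∈ Θ.D h⁻¹) (hc : c ∈ Θ.D t) :
    Θ.wR (g * h) t (Θ.θ (g * h)
      (Θ.θinv (g * h) (Θ.wR g h (Θ.θ g (u1 * u2 * (b1 * Θ.θ h v2)))) * c)) =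
    Θ.wR g (h * t) (Θ.θ g (u1 * u2 * Θ.wR h t (b1 * Θ.θ h (v2 * c)))) := by
  have hv2c : v2 * c ∈ Θ.D h⁻¹ := Θ.mul_mem_right h⁻¹ c v2 hv2
  have hu2b1 : u2 * b1 ∈ Θ.D h := Θ.mul_mem_left h u2 b1 hb1
  have hwmem : Θ.θinv h (u2 * b1) ∈ Θ.D h⁻¹ := Θ.θinv_mem h _ hu2b1
  have hwset : Θ.θinv h (u2 * b1) ∈ setMul (Θ.D h⁻¹) (Θ.D (h⁻¹ * g⁻¹)) := by
    apply θinv_image_mem Θ (g := h) (s := h⁻¹ * g⁻¹)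
    rw [mul_inv_cancel_left, Θ.commute]
    exact AddSubgroup.subset_closure (Set.mem_image2_of_mem hu2 hb1)
  have hy0 : Θ.θinv h (u2 * b1) * v2 ∈ setMul (Θ.D h⁻¹) (Θ.D (h⁻¹ * g⁻¹)) :=
    mul_mem_setMul_right Θ h⁻¹ (h⁻¹ * g⁻¹) v2 hwset
  have hyc : Θ.θinv h (u2 * b1) * v2 * c ∈ setMul (Θ.D h⁻¹) (Θ.D (h⁻¹ * g⁻¹)) :=
    mul_mem_setMul_right Θ h⁻¹ (h⁻¹ * g⁻¹) c hy0
  have hy0inv : Θ.θinv h (u2 * b1) * v2 ∈ Θ.D (g * h)⁻¹ := by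
    rw [mul_inv_rev]; exact memD_right Θ hy0
  have hX0 : Θ.θ (g * h) (Θ.θinv h (u2 * b1) * v2) ∈ setMul (Θ.D g) (Θ.D (g * h)) :=
    y_to_E Θ hy0
  have hXc : Θ.θ (g * h) (Θ.θinv h (u2 * b1) * v2 * c) ∈ setMul (Θ.D g) (Θ.D (g * h)) :=
    y_to_E Θ hyc
  have hθy0 : Θ.θ h (Θ.θinv h (u2 * b1) * v2) = u2 * b1 * Θ.θ h v2 := by
    rw [Θ.θ_mul h _ _ hwmem hv2, Θ.θ_right_inv h _ hu2b1]
  have hθyc : Θ.θ h (Θ.θinv h (u2 * b1) * v2 * c) = u2 * b1 * Θ.θ h (v2 * c) := by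
    rw [mul_assoc, Θ.θ_mul h _ _ hwmem hv2c, Θ.θ_right_inv h _ hu2b1]
  have hθy0g : Θ.θ h (Θ.θinv h (u2 * b1) * v2) ∈ Θ.D g⁻¹ := by
    rw [hθy0]; exact Θ.mul_mem_right g⁻¹ _ _ (Θ.mul_mem_right g⁻¹ b1 u2 hu2)
  have hθycg : Θ.θ h (Θ.θinv h (u2 * b1) * v2 * c) ∈ Θ.D g⁻¹ := by
    rw [hθyc]; exact Θ.mul_mem_right g⁻¹ _ _ (Θ.mul_mem_right g⁻¹ b1 u2 hu2)
  have e3 : u1 * u2 * (b1 * Θ.θ h v2) = u1 * Θ.θ h (Θ.θinv h (u2 * b1) * v2) := by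
    rw [hθy0, mul_assoc, ← mul_assoc u2 b1 (Θ.θ h v2)]
  have hwLX0 : Θ.wL g h (Θ.θ (g * h) (Θ.θinv h (u2 * b1) * v2)) ∈
      setMul (Θ.D g) (Θ.D (g * h)) := Θ.wL_mem g h _ hX0
  have hwLXc : Θ.wL g h (Θ.θ (g * h) (Θ.θinv h (u2 * b1) * v2 * c)) ∈
      setMul (Θ.D g) (Θ.D (g * h)) := Θ.wL_mem g h _ hXc
  have stepL1 : Θ.wR g h (Θ.θ g (u1 * u2 * (b1 * Θ.θ h v2)))
      = Θ.θ g u1 * Θ.wL g h (Θ.θ (g * h) (Θ.θinv h (u2 * b1) * v2)) := by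
    rw [e3, Θ.θ_mul g u1 _ hu1 hθy0g, Θ.θ_comp g h _ hy0,
      mulR_ext Θ g h (Θ.winvR_add g h) (Θ.winvR_mul g h) hwLX0 (Θ.θ g u1)]
    exact Θ.wR_inv' g h _ (mul_mem_setMul_left Θ g (g * h) _ hwLX0)
  have stepR3 : Θ.wR g h (Θ.θ g (u1 * Θ.θ h (Θ.θinv h (u2 * b1) * v2 * c)))
      = Θ.θ g u1 * Θ.wL g h (Θ.θ (g * h) (Θ.θinv h (u2 * b1) * v2 * c)) := by
    rw [Θ.θ_mul g u1 _ hu1 hθycg, Θ.θ_comp g h _ hyc,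
      mulR_ext Θ g h (Θ.winvR_add g h) (Θ.winvR_mul g h) hwLXc (Θ.θ g u1)]
    exact Θ.wR_inv' g h _ (mul_mem_setMul_left Θ g (g * h) _ hwLXc)
  have hT'E : Θ.θ h (v2 * c) ∈ setMul (Θ.D h) (Θ.D (h * t)) :=
    θ_image_mem Θ (AddSubgroup.subset_closure (Set.mem_image2_of_mem hv2 hc))
  have hb1T' : b1 * Θ.θ h (v2 * c) ∈ setMul (Θ.D h) (Θ.D (h * t)) :=
    mul_mem_setMul_left Θ h (h * t) b1 hT'E
  have e4 : u1 * u2 * (b1 * Θ.θ h (v2 * c)) = u1 * Θ.θ h (Θ.θinv h (u2 * b1) * v2 * c) := by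
    rw [hθyc, mul_assoc, ← mul_assoc u2 b1 (Θ.θ h (v2 * c))]
  have hycDt : Θ.θinv h (u2 * b1) * v2 * c ∈ setMul (Θ.D h⁻¹) (Θ.D t) := by
    rw [mul_assoc]
    exact AddSubgroup.subset_closure
      (Set.mem_image2_of_mem hwmem (Θ.mul_mem_left t v2 c hc))
  have hθycE : Θ.θ h (Θ.θinv h (u2 * b1) * v2 * c) ∈ setMul (Θ.D h) (Θ.D (h * t)) :=
    θ_image_mem Θ hycDt
  have hmF : u1 * Θ.θ h (Θ.θinv h (u2 * b1) * v2 * c) ∈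
      setMul (setMul (Θ.D g⁻¹) (Θ.D h)) (Θ.D (h * t)) := F_mem Θ g h t hu1 hθycE
  have stepR0 : u1 * u2 * Θ.wR h t (b1 * Θ.θ h (v2 * c))
      = Θ.wR h t (u1 * Θ.θ h (Θ.θinv h (u2 * b1) * v2 * c)) := by
    rw [mulR_ext Θ h t (Θ.wR_add h t) (Θ.wR_mul h t) hb1T' (u1 * u2), e4]
  have hΦ : Θ.θ (g * h) (Θ.θinv (g * h)
        (Θ.θ g u1 * Θ.wL g h (Θ.θ (g * h) (Θ.θinv h (u2 * b1) * v2))) * c)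
      = Θ.θ g u1 * Θ.wL g h (Θ.θ (g * h) (Θ.θinv h (u2 * b1) * v2 * c)) := by
    rw [Phi_lin Θ (g * h) c (memD_right Θ hwLX0) (Θ.θ g u1),
      (Phi_wL Θ g h c hX0).2, Θ.θ_left_inv (g * h) _ hy0inv]
  calc Θ.wR (g * h) t (Θ.θ (g * h)
        (Θ.θinv (g * h) (Θ.wR g h (Θ.θ g (u1 * u2 * (b1 * Θ.θ h v2)))) * c))
      = Θ.wR (g * h) t (Θ.θ g u1 * Θ.wL g h
          (Θ.θ (g * h) (Θ.θinv h (u2 * b1) * v2 * c))) := by rw [stepL1, hΦ]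
    _ = Θ.wR (g * h) t (Θ.wR g h
          (Θ.θ g (u1 * Θ.θ h (Θ.θinv h (u2 * b1) * v2 * c)))) := by rw [stepR3]
    _ = Θ.wR g (h * t) (Θ.θ g (Θ.wR h t
          (u1 * Θ.θ h (Θ.θinv h (u2 * b1) * v2 * c)))) := (Θ.cocycle g h t _ hmF).symm
    _ = Θ.wR g (h * t) (Θ.θ g (u1 * u2 * Θ.wR h t (b1 * Θ.θ h (v2 * c)))) := by
          rw [stepR0]

lemma core (g h t : G) (a1 a2 b1 b2 c : A)
    (ha1 : a1 ∈ Θ.D g) (ha2 : a2 ∈ Θ.D g) (hb1 : b1 ∈ Θ.D h) (hb2 : b2 ∈ Θ.D h)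
    (hc : c ∈ Θ.D t) :
    crossedMul Θ (g * h) t (crossedMul Θ g h (a1 * a2) (b1 * b2)) c =
      crossedMul Θ g (h * t) (a1 * a2) (crossedMul Θ h t (b1 * b2) c) := by
  have hu1 := Θ.θinv_mem g a1 ha1
  have hu2 := Θ.θinv_mem g a2 ha2
  have hv1 := Θ.θinv_mem h b1 hb1
  have hv2 := Θ.θinv_mem h b2 hb2
  have hv2c : Θ.θinv h b2 * c ∈ Θ.D h⁻¹ := Θ.mul_mem_right h⁻¹ c _ hv2
  have e1 : Θ.θinv g (a1 * a2) * (b1 * b2)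
      = Θ.θinv g a1 * Θ.θinv g a2 * (b1 * Θ.θ h (Θ.θinv h b2)) := by
    rw [θinv_mul Θ g ha1 ha2, Θ.θ_right_inv h b2 hb2]
  have e2 : Θ.θ h (Θ.θinv h (b1 * b2) * c) = b1 * Θ.θ h (Θ.θinv h b2 * c) := by
    rw [θinv_mul Θ h hb1 hb2, mul_assoc, Θ.θ_mul h _ _ hv1 hv2c, Θ.θ_right_inv h b1 hb1]
  unfold crossedMul
  rw [e1, e2, θinv_mul Θ g ha1 ha2]
  exact core' Θ g h t (Θ.θinv g a1) (Θ.θinv g a2) b1 (Θ.θinv h b2) c hu1 hu2 hb1 hv2 hc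

end Helpers


/-- STATEMENT 5, Theorem 2.4: the crossed product `A ⋊_Θ G = ⊕_{g} D_g δ_g`
with multiplication `(a δ_g)·(b δ_h) = θ_g(θ_g⁻¹(a)·b)·w_{g,h} δ_{gh}` is an
associative algebra: the monomial products land in the correct homogeneous
components (so that the multiplication is well-defined on the direct sum,
where it is extended `k`-bilinearly) and satisfy the associativity law
`(a δ_g · b δ_h) · c δ_t = a δ_g · (b δ_h · c δ_t)`. -/

theorem crossedProduct_assoc {k G A : Type} [CommRing k] [Group G]
    [NonUnitalRing A] [Module k A] (Θ : TwistedPartialAction k G A) :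
    (∀ (g h : G) (a b : A), a ∈ Θ.D g → b ∈ Θ.D h →
      crossedMul Θ g h a b ∈ Θ.D (g * h)) ∧
    (∀ (g h t : G) (a b c : A), a ∈ Θ.D g → b ∈ Θ.D h → c ∈ Θ.D t →
      crossedMul Θ (g * h) t (crossedMul Θ g h a b) c =
        crossedMul Θ g (h * t) a (crossedMul Θ h t b c)) := by
  constructor
  · intro g h a b ha hb
    exact crossedMul_memD Θ ha hb
  · intro g h t a b c ha hb hc
    have ha' : a ∈ setMul (Θ.D g) (Θ.D g) := by rw [Θ.idem g]; exact ha
    refine (setMul_ind (P := fun a => a ∈ Θ.D g ∧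
        crossedMul Θ (g * h) t (crossedMul Θ g h a b) c =
          crossedMul Θ g (h * t) a (crossedMul Θ h t b c)) ?_ ?_ ?_ ?_ a ha').2
    · refine ⟨zero_mem _, ?_⟩
      rw [crossedMul_zero_left Θ, crossedMul_zero_left Θ, crossedMul_zero_left Θ]
    · rintro x y ⟨hx, ihx⟩ ⟨hy, ihy⟩
      refine ⟨add_mem hx hy, ?_⟩
      rw [crossedMul_add_left Θ hx hy hb,
        crossedMul_add_left Θ (crossedMul_memD Θ hx hb) (crossedMul_memD Θ hy hb) hc,
        ihx, ihy, crossedMul_add_left Θ hx hy (crossedMul_memD Θ hb hc)]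
    · rintro x ⟨hx, ihx⟩
      refine ⟨neg_mem hx, ?_⟩
      rw [crossedMul_neg_left Θ hx hb,
        crossedMul_neg_left Θ (crossedMul_memD Θ hx hb) hc, ihx,
        crossedMul_neg_left Θ hx (crossedMul_memD Θ hb hc)]
    · intro a1 ha1 a2 ha2
      have ha12 : a1 * a2 ∈ Θ.D g := Θ.mul_mem_left g a1 a2 ha2
      refine ⟨ha12, ?_⟩
      have hb' : b ∈ setMul (Θ.D h) (Θ.D h) := by rw [Θ.idem h]; exact hb
      refine (setMul_ind (P := fun b => b ∈ Θ.D h ∧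
          crossedMul Θ (g * h) t (crossedMul Θ g h (a1 * a2) b) c =
            crossedMul Θ g (h * t) (a1 * a2) (crossedMul Θ h t b c)) ?_ ?_ ?_ ?_ b hb').2
      · refine ⟨zero_mem _, ?_⟩
        rw [crossedMul_zero_right Θ, crossedMul_zero_left Θ, crossedMul_zero_left Θ,
          crossedMul_zero_right Θ]
      · rintro x y ⟨hx, ihx⟩ ⟨hy, ihy⟩
        refine ⟨add_mem hx hy, ?_⟩
        rw [crossedMul_add_right Θ ha12 hx hy,
          crossedMul_add_left Θ (crossedMul_memD Θ ha12 hx) (crossedMul_memD Θ ha12 hy) hc,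
          ihx, ihy, crossedMul_add_left Θ hx hy hc,
          crossedMul_add_right Θ ha12 (crossedMul_memD Θ hx hc) (crossedMul_memD Θ hy hc)]
      · rintro x ⟨hx, ihx⟩
        refine ⟨neg_mem hx, ?_⟩
        rw [crossedMul_neg_right Θ ha12 hx,
          crossedMul_neg_left Θ (crossedMul_memD Θ ha12 hx) hc, ihx,
          crossedMul_neg_left Θ hx hc,
          crossedMul_neg_right Θ ha12 (crossedMul_memD Θ hx hc)]
      · intro b1 hb1 b2 hb2
        exact ⟨Θ.mul_mem_left h b1 b2 hb2, core Θ g h t a1 a2 b1 b2 c ha1 ha2 hb1 hb2 hc⟩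
end

section
/- Let (R, R', M, M', τ, τ') be a Morita context whose linking algebra C = [[R, M],[M', R']] is idempotent, and suppose there exist multipliers u, v of C with uv = e₁₁ and vu = e₂₂ (where e₁₁, e₂₂ are the obvious corner multipliers). Then u, v can be chosen such that the map θ : R' → R given by r' ↦ u·r'·v is a ring isomorphism, with inverse r ↦ v·r·u. -/
/-- A Morita context `(R, R', M, M', τ, τ')` between (non-necessarily unital)
rings `R` and `R'`:  `M` is an `(R,R')`-bimodule, `M'` an `(R',R)`-bimodule,
and `p`/`p'` are the balanced biadditive pairings induced by
`τ : M ⊗_{R'} M' → R` and `τ' : M' ⊗_R M → R'`, satisfying the mixed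
associativity conditions. -/
structure MoritaContext (R R' M M' : Type) [NonUnitalRing R] [NonUnitalRing R']
    [AddCommGroup M] [AddCommGroup M'] where
  sRM : R → M → M
  sMR : M → R' → M
  sRM' : R' → M' → M'
  sMR' : M' → R → M'
  p : M → M' → R
  p' : M' → M → R'
  sRM_add_left : ∀ (r s : R) (m : M), sRM (r + s) m = sRM r m + sRM s m
  sRM_add_right : ∀ (r : R) (m n : M), sRM r (m + n) = sRM r m + sRM r n
  sMR_add_left : ∀ (m n : M) (r' : R'), sMR (m + n) r' = sMR m r' + sMR n r'
  sMR_add_right : ∀ (m : M) (r' s' : R'), sMR m (r' + s') = sMR m r' + sMR m s'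
  sRM'_add_left : ∀ (r' s' : R') (m' : M'), sRM' (r' + s') m' = sRM' r' m' + sRM' s' m'
  sRM'_add_right : ∀ (r' : R') (m' n' : M'), sRM' r' (m' + n') = sRM' r' m' + sRM' r' n'
  sMR'_add_left : ∀ (m' n' : M') (r : R), sMR' (m' + n') r = sMR' m' r + sMR' n' r
  sMR'_add_right : ∀ (m' : M') (r s : R), sMR' m' (r + s) = sMR' m' r + sMR' m' s
  p_add_left : ∀ (m n : M) (m' : M'), p (m + n) m' = p m m' + p n m'
  p_add_right : ∀ (m : M) (m' n' : M'), p m (m' + n') = p m m' + p m n'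
  p'_add_left : ∀ (m' n' : M') (m : M), p' (m' + n') m = p' m' m + p' n' m
  p'_add_right : ∀ (m' : M') (m n : M), p' m' (m + n) = p' m' m + p' m' n
  sRM_mul : ∀ (r s : R) (m : M), sRM (r * s) m = sRM r (sRM s m)
  sMR_mul : ∀ (m : M) (r' s' : R'), sMR (sMR m r') s' = sMR m (r' * s')
  bimod_M : ∀ (r : R) (m : M) (r' : R'), sMR (sRM r m) r' = sRM r (sMR m r')
  sRM'_mul : ∀ (r' s' : R') (m' : M'), sRM' (r' * s') m' = sRM' r' (sRM' s' m')
  sMR'_mul : ∀ (m' : M') (r s : R), sMR' (sMR' m' r) s = sMR' m' (r * s)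
  bimod_M' : ∀ (r' : R') (m' : M') (r : R), sMR' (sRM' r' m') r = sRM' r' (sMR' m' r)
  p_left : ∀ (r : R) (m : M) (m' : M'), p (sRM r m) m' = r * p m m'
  p_right : ∀ (m : M) (m' : M') (r : R), p m (sMR' m' r) = p m m' * r
  p_balanced : ∀ (m : M) (r' : R') (m' : M'), p (sMR m r') m' = p m (sRM' r' m')
  p'_left : ∀ (r' : R') (m' : M') (m : M), p' (sRM' r' m') m = r' * p' m' m
  p'_right : ∀ (m' : M') (m : M) (r' : R'), p' m' (sMR m r') = p' m' m * r'
  p'_balanced : ∀ (m' : M') (r : R) (m : M), p' (sMR' m' r) m = p' m' (sRM r m)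
  assoc₁ : ∀ (m₁ : M) (m' : M') (m₂ : M), sRM (p m₁ m') m₂ = sMR m₁ (p' m' m₂)
  assoc₂ : ∀ (m'₁ : M') (m : M) (m'₂ : M'), sRM' (p' m'₁ m) m'₂ = sMR' m'₁ (p m m'₂)

variable {R R' M M' : Type} [NonUnitalRing R] [NonUnitalRing R']
  [AddCommGroup M] [AddCommGroup M']

/-- The multiplication of the linking algebra `C = [[R, M], [M', R']]` of a
Morita context, an element `[[r, m], [m', r']]` being encoded as the tuple
`(r, m, m', r')`. -/
def lmul (c : MoritaContext R R' M M') (x y : R × M × M' × R') : R × M × M' × R' :=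
  (x.1 * y.1 + c.p x.2.1 y.2.2.1,
   c.sRM x.1 y.2.1 + c.sMR x.2.1 y.2.2.2,
   c.sMR' x.2.2.1 y.1 + c.sRM' x.2.2.2 y.2.2.1,
   c.p' x.2.2.1 y.2.1 + x.2.2.2 * y.2.2.2)

/-- A multiplier `(L, Rm)` of the linking algebra `C` of a Morita context. -/
structure CMult (c : MoritaContext R R' M M') where
  L : R × M × M' × R' → R × M × M' × R'
  Rm : R × M × M' × R' → R × M × M' × R'
  L_add : ∀ x y, L (x + y) = L x + L y
  R_add : ∀ x y, Rm (x + y) = Rm x + Rm y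
  L_mul : ∀ x y, L (lmul c x y) = lmul c (L x) y
  R_mul : ∀ x y, Rm (lmul c x y) = lmul c x (Rm y)
  compat : ∀ x y, lmul c (Rm x) y = lmul c x (L y)

/-- Left action of the corner multiplier `e₁₁` on the linking algebra. -/
def e11L (x : R × M × M' × R') : R × M × M' × R' := (x.1, x.2.1, 0, 0)

/-- Right action of the corner multiplier `e₁₁` on the linking algebra. -/
def e11R (x : R × M × M' × R') : R × M × M' × R' := (x.1, 0, x.2.2.1, 0)

/-- Left action of the corner multiplier `e₂₂` on the linking algebra. -/
def e22L (x : R × M × M' × R') : R × M × M' × R' := (0, 0, x.2.2.1, x.2.2.2)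

/-- Right action of the corner multiplier `e₂₂` on the linking algebra. -/
def e22R (x : R × M × M' × R') : R × M × M' × R' := (0, x.2.1, 0, x.2.2.2)

/-- `u·v = e₁₁` and `v·u = e₂₂` in the multiplier algebra of the linking
algebra (recall `L_{uv} = L_u ∘ L_v` and `R_{uv} = R_v ∘ R_u`). -/
def CornerUV (c : MoritaContext R R' M M') (u v : CMult c) : Prop :=
  (∀ x, u.L (v.L x) = e11L x) ∧ (∀ x, v.Rm (u.Rm x) = e11R x) ∧
  (∀ x, v.L (u.L x) = e22L x) ∧ (∀ x, u.Rm (v.Rm x) = e22R x)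

/-- The linking algebra is idempotent: `C·C = C`. -/
def LinkIdem (c : MoritaContext R R' M M') : Prop :=
  AddSubgroup.closure
    (Set.image2 (lmul c) (Set.univ : Set (R × M × M' × R')) Set.univ) = ⊤


section Aux

variable {c : MoritaContext R R' M M'}

private lemma zr {G : Type} [AddCommGroup G] {a : G} (h : a = a + a) : a = 0 :=
  left_eq_add.mp h

@[local simp] private lemma p_zero_left (m' : M') : c.p 0 m' = 0 := by
  have h := c.p_add_left 0 0 m'; rw [add_zero] at h; exact zr h

@[local simp] private lemma p_zero_right (m : M) : c.p m 0 = 0 := by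
  have h := c.p_add_right m 0 0; rw [add_zero] at h; exact zr h

@[local simp] private lemma p'_zero_left (m : M) : c.p' 0 m = 0 := by
  have h := c.p'_add_left 0 0 m; rw [add_zero] at h; exact zr h

@[local simp] private lemma p'_zero_right (m' : M') : c.p' m' 0 = 0 := by
  have h := c.p'_add_right m' 0 0; rw [add_zero] at h; exact zr h

@[local simp] private lemma sRM_zero_left (m : M) : c.sRM 0 m = 0 := by
  have h := c.sRM_add_left 0 0 m; rw [add_zero] at h; exact zr h

@[local simp] private lemma sRM_zero_right (r : R) : c.sRM r 0 = 0 := by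
  have h := c.sRM_add_right r 0 0; rw [add_zero] at h; exact zr h

@[local simp] private lemma sMR_zero_left (r' : R') : c.sMR 0 r' = 0 := by
  have h := c.sMR_add_left 0 0 r'; rw [add_zero] at h; exact zr h

@[local simp] private lemma sMR_zero_right (m : M) : c.sMR m 0 = 0 := by
  have h := c.sMR_add_right m 0 0; rw [add_zero] at h; exact zr h

@[local simp] private lemma sRM'_zero_left (m' : M') : c.sRM' 0 m' = 0 := by
  have h := c.sRM'_add_left 0 0 m'; rw [add_zero] at h; exact zr h

@[local simp] private lemma sRM'_zero_right (r' : R') : c.sRM' r' 0 = 0 := by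
  have h := c.sRM'_add_right r' 0 0; rw [add_zero] at h; exact zr h

@[local simp] private lemma sMR'_zero_left (r : R) : c.sMR' 0 r = 0 := by
  have h := c.sMR'_add_left 0 0 r; rw [add_zero] at h; exact zr h

@[local simp] private lemma sMR'_zero_right (m' : M') : c.sMR' m' 0 = 0 := by
  have h := c.sMR'_add_right m' 0 0; rw [add_zero] at h; exact zr h

/-- `e₁₁` as a multiplier. -/
private def e11M (c : MoritaContext R R' M M') : CMult c where
  L := e11L
  Rm := e11R
  L_add := by intro x y; simp [e11L, Prod.ext_iff]
  R_add := by intro x y; simp [e11R, Prod.ext_iff]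
  L_mul := by intro x y; simp [e11L, lmul, Prod.ext_iff]
  R_mul := by intro x y; simp [e11R, lmul, Prod.ext_iff]
  compat := by intro x y; simp [e11L, e11R, lmul, Prod.ext_iff]

/-- `e₂₂` as a multiplier. -/
private def e22M (c : MoritaContext R R' M M') : CMult c where
  L := e22L
  Rm := e22R
  L_add := by intro x y; simp [e22L, Prod.ext_iff]
  R_add := by intro x y; simp [e22R, Prod.ext_iff]
  L_mul := by intro x y; simp [e22L, lmul, Prod.ext_iff]
  R_mul := by intro x y; simp [e22R, lmul, Prod.ext_iff]
  compat := by intro x y; simp [e22L, e22R, lmul, Prod.ext_iff]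

/-- Product of multipliers. -/
private def cmul (w1 w2 : CMult c) : CMult c where
  L := fun x => w1.L (w2.L x)
  Rm := fun x => w2.Rm (w1.Rm x)
  L_add := by intro x y; rw [w2.L_add, w1.L_add]
  R_add := by intro x y; rw [w1.R_add, w2.R_add]
  L_mul := by intro x y; rw [w2.L_mul, w1.L_mul]
  R_mul := by intro x y; rw [w1.R_mul, w2.R_mul]
  compat := by intro x y; rw [w2.compat, w1.compat]

/-- On an idempotent linking algebra, left and right multiplier actions commute. -/
private lemma commLR (hidem : LinkIdem c) (w1 w2 : CMult c) (x : R × M × M' × R') :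
    w1.L (w2.Rm x) = w2.Rm (w1.L x) := by
  set f : (R × M × M' × R') →+ (R × M × M' × R') :=
    AddMonoidHom.mk' (fun x => w1.L (w2.Rm x)) (fun a b => by rw [w2.R_add, w1.L_add]) with hf
  set g : (R × M × M' × R') →+ (R × M × M' × R') :=
    AddMonoidHom.mk' (fun x => w2.Rm (w1.L x)) (fun a b => by rw [w1.L_add, w2.R_add]) with hg
  have hle : AddSubgroup.closure
      (Set.image2 (lmul c) (Set.univ : Set (R × M × M' × R')) Set.univ) ≤ f.eqLocus g := by
    rw [AddSubgroup.closure_le]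
    rintro z ⟨a, -, b, -, rfl⟩
    show w1.L (w2.Rm (lmul c a b)) = w2.Rm (w1.L (lmul c a b))
    rw [w2.R_mul, w1.L_mul, w1.L_mul, w2.R_mul]
  rw [LinkIdem] at hidem
  rw [hidem] at hle
  have hx : x ∈ f.eqLocus g := hle (AddSubgroup.mem_top x)
  exact hx

private lemma main_aux (hidem : LinkIdem c) (U V : CMult c) (hc : CornerUV c U V)
    (hUL3 : ∀ x, (U.L x).2.2.1 = 0)
    (hVR2 : ∀ x, (V.Rm x).2.1 = 0) (hVR4 : ∀ x, (V.Rm x).2.2.2 = 0)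
    (hUR1 : ∀ x, (U.Rm x).1 = 0) (hUR3 : ∀ x, (U.Rm x).2.2.1 = 0)
    (hVL2 : ∀ x, (V.L x).2.1 = 0) :
    (let θ : R' → R := fun r' => (V.Rm (U.L ((0 : R), (0 : M), (0 : M'), r'))).1
     let θ' : R → R' := fun r => (U.Rm (V.L (r, (0 : M), (0 : M'), (0 : R')))).2.2.2
     (∀ a b : R', θ (a + b) = θ a + θ b) ∧
     (∀ a b : R', θ (a * b) = θ a * θ b) ∧
     (∀ a : R', θ' (θ a) = a) ∧
     (∀ r : R, θ (θ' r) = r)) := by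
  obtain ⟨huvL, huvR, hvuL, hvuR⟩ := hc
  intro θ θ'
  set ι : R' → R × M × M' × R' := fun r' => ((0 : R), (0 : M), (0 : M'), r') with hι
  set ιR : R → R × M × M' × R' := fun r => (r, (0 : M), (0 : M'), (0 : R')) with hιR
  have commUV : ∀ x, U.L (V.Rm x) = V.Rm (U.L x) := commLR hidem U V
  have commVU : ∀ x, V.L (U.Rm x) = U.Rm (V.L x) := commLR hidem V U
  have commUU : ∀ x, U.L (U.Rm x) = U.Rm (U.L x) := commLR hidem U U
  have commVV : ∀ x, V.L (V.Rm x) = V.Rm (V.L x) := commLR hidem V V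
  -- the matrix versions of θ, θ'
  set Θ : R' → R × M × M' × R' := fun a => V.Rm (U.L (ι a)) with hΘ
  set Θ' : R → R × M × M' × R' := fun r => U.Rm (V.L (ιR r)) with hΘ'
  have hθ : ∀ a, θ a = (Θ a).1 := fun a => rfl
  have hθ' : ∀ r, θ' r = (Θ' r).2.2.2 := fun r => rfl
  have shape : ∀ a, Θ a = (θ a, 0, 0, 0) := by
    intro a
    have e1 : Θ a = ((Θ a).1, (Θ a).2.1, (Θ a).2.2.1, (Θ a).2.2.2) := rfl
    have e2 : (Θ a).2.1 = 0 := hVR2 _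
    have e4 : (Θ a).2.2.2 = 0 := hVR4 _
    have e3 : (Θ a).2.2.1 = 0 := by
      rw [hΘ]; simp only [← commUV]; exact hUL3 _
    rw [hθ]; rw [e1, e2, e3, e4]
  have shape' : ∀ r, Θ' r = (0, 0, 0, θ' r) := by
    intro r
    have e1 : Θ' r = ((Θ' r).1, (Θ' r).2.1, (Θ' r).2.2.1, (Θ' r).2.2.2) := rfl
    have a1 : (Θ' r).1 = 0 := hUR1 _
    have a3 : (Θ' r).2.2.1 = 0 := hUR3 _
    have a2 : (Θ' r).2.1 = 0 := by
      rw [hΘ']; simp only [← commVU]; exact hVL2 _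
    rw [hθ']; rw [e1, a1, a2, a3]
  refine ⟨?_, ?_, ?_, ?_⟩
  · -- additivity
    intro a b
    have hadd : ι (a + b) = ι a + ι b := by simp [hι, Prod.ext_iff]
    simp only [hθ, hΘ, hadd, U.L_add, V.R_add, Prod.fst_add]
  · -- multiplicativity
    intro a b
    have hprod : ι (a * b) = lmul c (ι a) (ι b) := by
      simp [hι, lmul, Prod.ext_iff]
    have he22 : e22L (ι b) = ι b := rfl
    have step : Θ (a * b) = lmul c (Θ a) (Θ b) := by
      rw [hΘ]
      show V.Rm (U.L (ι (a * b))) = _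
      rw [hprod]
      conv_lhs => rw [← he22, ← hvuL (ι b)]
      rw [← V.compat, U.L_mul, V.R_mul, commUV]
    rw [hθ, step, shape a, shape b]
    simp [lmul]
  · -- θ' ∘ θ = id
    intro a
    have h1 : ιR (θ a) = Θ a := (shape a).symm
    show (U.Rm (V.L (ιR (θ a)))).2.2.2 = a
    rw [h1, hΘ]
    rw [commVV, hvuL, hvuR]
    rfl
  · -- θ ∘ θ' = id
    intro r
    have h1 : ι (θ' r) = Θ' r := (shape' r).symm
    show (V.Rm (U.L (ι (θ' r)))).1 = r
    rw [h1, hΘ']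
    rw [commUU, huvL, huvR]
    rfl

end Aux


/-- STATEMENT 8, Proposition 4.5: if the linking algebra of a Morita context
is idempotent and admits multipliers `u, v` with `uv = e₁₁`, `vu = e₂₂`, then
`u, v` can be chosen so that `θ : R' → R`, `r' ↦ u·r'·v` is a ring isomorphism
with inverse `r ↦ v·r·u`. -/
theorem morita_corner_iso (c : MoritaContext R R' M M')
    (hidem : LinkIdem c)
    (h : ∃ u v : CMult c, CornerUV c u v) :
    ∃ u v : CMult c, CornerUV c u v ∧
      (let θ : R' → R := fun r' => (v.Rm (u.L ((0 : R), (0 : M), (0 : M'), r'))).1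
       let θ' : R → R' := fun r => (u.Rm (v.L (r, (0 : M), (0 : M'), (0 : R')))).2.2.2
       (∀ a b : R', θ (a + b) = θ a + θ b) ∧
       (∀ a b : R', θ (a * b) = θ a * θ b) ∧
       (∀ a : R', θ' (θ a) = a) ∧
       (∀ r : R, θ (θ' r) = r)) := by
  
  obtain ⟨u₀, v₀, h1, h2, h3, h4⟩ := h
  set U : CMult c := cmul (e11M c) (cmul u₀ (e22M c)) with hU
  set V : CMult c := cmul (e22M c) (cmul v₀ (e11M c)) with hV
  have hcorner : CornerUV c U V := by
    refine ⟨?_, ?_, ?_, ?_⟩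
    · intro x
      show e11L (u₀.L (e22L (v₀.L (e11L x)))) = e11L x
      rw [← h3 (v₀.L (e11L x)), h1 (e11L x),
        show e11L (e11L x) = e11L x from rfl, h1 (e11L x)]
      rfl
    · intro x
      show e11R (v₀.Rm (e22R (u₀.Rm (e11R x)))) = e11R x
      rw [← h4 (u₀.Rm (e11R x)), h2 (e11R x),
        show e11R (e11R x) = e11R x from rfl, h2 (e11R x)]
      rfl
    · intro x
      show e22L (v₀.L (e11L (u₀.L (e22L x)))) = e22L x
      rw [← h1 (u₀.L (e22L x)), h3 (e22L x),
        show e22L (e22L x) = e22L x from rfl, h3 (e22L x)]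
      rfl
    · intro x
      show e22R (u₀.Rm (e11R (v₀.Rm (e22R x)))) = e22R x
      rw [← h2 (v₀.Rm (e22R x)), h4 (e22R x),
        show e22R (e22R x) = e22R x from rfl, h4 (e22R x)]
      rfl
  exact ⟨U, V, hcorner,
    main_aux hidem U V hcorner (fun _ => rfl) (fun _ => rfl) (fun _ => rfl)
      (fun _ => rfl) (fun _ => rfl) (fun _ => rfl)⟩
end

section
/- Let R be a left s-unital ring and M a left R-module with RM = M. Then for every x ∈ M one has x ∈ Rx. In particular, M is torsion-free (Rx = 0 implies x = 0). -/
/-- Two-element version of left s-unitality. -/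
lemma sunital_pair {R : Type} [NonUnitalRing R]
    (hsu : ∀ r : R, ∃ y : R, y * r = r) (a b : R) :
    ∃ u : R, u * a = a ∧ u * b = b := by
  obtain ⟨e, he⟩ := hsu a
  obtain ⟨f, hf⟩ := hsu (b - e * b)
  refine ⟨e + f - f * e, ?_, ?_⟩
  · rw [sub_mul, add_mul, he, mul_assoc, he]; abel
  · have : f * b - f * (e * b) = b - e * b := by
      rw [← mul_sub]; exact hf
    rw [sub_mul, add_mul, mul_assoc]
    calc e * b + f * b - f * (e * b) = e * b + (f * b - f * (e * b)) := by abel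
    _ = e * b + (b - e * b) := by rw [this]
    _ = b := by abel

/-- STATEMENT 10, Lemma 5.7: if `R` is a left `s`-unital ring and `M` a left
`R`-module with `RM = M`, then every `x ∈ M` satisfies `x ∈ Rx`; in
particular `M` is torsion-free. -/
theorem sunital_module_mem (R M : Type) [NonUnitalRing R] [AddCommGroup M]
    (smul : R → M → M)
    (smul_add_left : ∀ (r s : R) (x : M), smul (r + s) x = smul r x + smul s x)
    (smul_add_right : ∀ (r : R) (x y : M), smul r (x + y) = smul r x + smul r y)
    (smul_mul : ∀ (r s : R) (x : M), smul (r * s) x = smul r (smul s x))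
    (hsu : ∀ r : R, ∃ y : R, y * r = r)
    (hRM : AddSubgroup.closure {x : M | ∃ r y, x = smul r y} = ⊤) :
    (∀ x : M, ∃ r : R, smul r x = x) ∧
    (∀ x : M, (∀ r : R, smul r x = 0) → x = 0) := by
  have smul_zero : ∀ r : R, smul r (0 : M) = 0 := by
    intro r
    have := smul_add_right r 0 0
    rw [add_zero] at this
    exact (left_eq_add.mp this)
  have smul_neg : ∀ (r : R) (x : M), smul r (-x) = - smul r x := by
    intro r x
    have := smul_add_right r x (-x)
    rw [add_neg_cancel, smul_zero] at this
    exact (neg_eq_of_add_eq_zero_right this.symm).symm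
  have key : ∀ x : M, ∃ r : R, smul r x = x := by
    intro x
    have hx : x ∈ AddSubgroup.closure {x : M | ∃ r y, x = smul r y} := by
      rw [hRM]; trivial
    induction hx using AddSubgroup.closure_induction with
    | mem z hz =>
      obtain ⟨r, y, rfl⟩ := hz
      obtain ⟨e, he⟩ := hsu r
      exact ⟨e, by rw [← smul_mul, he]⟩
    | zero => exact ⟨0, smul_zero 0⟩
    | add a b _ _ ha hb =>
      obtain ⟨r, hr⟩ := ha
      obtain ⟨s, hs⟩ := hb
      obtain ⟨u, hur, hus⟩ := sunital_pair hsu r s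
      refine ⟨u, ?_⟩
      rw [smul_add_right, ← hr, ← hs, ← smul_mul, ← smul_mul, hur, hus]
    | neg a _ ha =>
      obtain ⟨r, hr⟩ := ha
      exact ⟨r, by rw [smul_neg, hr]⟩
  refine ⟨key, fun x hx => ?_⟩
  obtain ⟨r, hr⟩ := key x
  rw [← hr, hx r]
end

section
/- Let (R, R', M, M', τ, τ') be a Morita context with R and R' s-unital rings, τ and τ' surjective, M'R = R'M' = M' and MR' = RM = M. Then M' ⊗_R R ≅ M' via m'⊗r ↦ m'r, and the map τ : M ⊗_{R'} M' → R is bijective (similarly τ' is bijective). -/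
variable {R R' M M' : Type} [NonUnitalRing R] [NonUnitalRing R']
  [AddCommGroup M] [AddCommGroup M']

section SUnit
variable {A X : Type} [NonUnitalRing A] [AddCommGroup X]

lemma pair_right (hr : ∀ r : A, ∃ y, r * y = r) (a b : A) :
    ∃ g : A, a * g = a ∧ b * g = b := by
  obtain ⟨u, hu⟩ := hr a
  obtain ⟨v, hv⟩ := hr (b - b * u)
  refine ⟨u + v - u * v, ?_, ?_⟩
  · have h : a * (u + v - u * v) = a * u + (a * v - (a * u) * v) := by noncomm_ring
    rw [h, hu]; abel
  · have h : b * (u + v - u * v) = b * u + (b - b * u) * v := by noncomm_ring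
    rw [h, hv]; abel

lemma pair_left (hl : ∀ r : A, ∃ y, y * r = r) (a b : A) :
    ∃ g : A, g * a = a ∧ g * b = b := by
  obtain ⟨u, hu⟩ := hl a
  obtain ⟨v, hv⟩ := hl (b - u * b)
  refine ⟨u + v - v * u, ?_, ?_⟩
  · have h : (u + v - v * u) * a = u * a + (v * a - v * (u * a)) := by noncomm_ring
    rw [h, hu]; abel
  · have h : (u + v - v * u) * b = u * b + v * (b - u * b) := by noncomm_ring
    rw [h, hv]; abel

lemma exists_sunit_right (s : X → A → X)
    (hadd : ∀ x y a, s (x + y) a = s x a + s y a)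
    (hmul : ∀ x a b, s (s x a) b = s x (a * b))
    (hr : ∀ r : A, ∃ y, r * y = r)
    (hgen : AddSubgroup.closure {x : X | ∃ x₀ a, x = s x₀ a} = ⊤) (x : X) :
    ∃ e, s x e = x := by
  have hx : x ∈ AddSubgroup.closure {x : X | ∃ x₀ a, x = s x₀ a} :=
    hgen ▸ AddSubgroup.mem_top x
  induction hx using AddSubgroup.closure_induction with
  | mem y hy =>
    obtain ⟨x₀, a, rfl⟩ := hy
    obtain ⟨g, hg⟩ := hr a
    exact ⟨g, by rw [hmul, hg]⟩
  | zero =>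
    exact ⟨0, (AddMonoidHom.mk' (fun y => s y 0) (fun y z => hadd y z 0)).map_zero⟩
  | add y z _ _ ihy ihz =>
    obtain ⟨e₁, he₁⟩ := ihy
    obtain ⟨e₂, he₂⟩ := ihz
    obtain ⟨g, hg1, hg2⟩ := pair_right hr e₁ e₂
    have hy' : s y g = y := by rw [← he₁, hmul, hg1]
    have hz' : s z g = z := by rw [← he₂, hmul, hg2]
    exact ⟨g, by rw [hadd, hy', hz']⟩
  | neg y _ ih =>
    obtain ⟨e, he⟩ := ih
    have hneg : s (-y) e = - s y e :=
      (AddMonoidHom.mk' (fun z => s z e) (fun z w => hadd z w e)).map_neg y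
    exact ⟨e, by rw [hneg, he]⟩

lemma exists_sunit_left (s : A → X → X)
    (hadd : ∀ a x y, s a (x + y) = s a x + s a y)
    (hmul : ∀ a b x, s (a * b) x = s a (s b x))
    (hl : ∀ r : A, ∃ y, y * r = r)
    (hgen : AddSubgroup.closure {x : X | ∃ a x₀, x = s a x₀} = ⊤) (x : X) :
    ∃ e, s e x = x := by
  have hx : x ∈ AddSubgroup.closure {x : X | ∃ a x₀, x = s a x₀} :=
    hgen ▸ AddSubgroup.mem_top x
  induction hx using AddSubgroup.closure_induction with
  | mem y hy =>
    obtain ⟨a, x₀, rfl⟩ := hy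
    obtain ⟨g, hg⟩ := hl a
    exact ⟨g, by rw [← hmul, hg]⟩
  | zero =>
    exact ⟨0, (AddMonoidHom.mk' (s 0) (hadd 0)).map_zero⟩
  | add y z _ _ ihy ihz =>
    obtain ⟨e₁, he₁⟩ := ihy
    obtain ⟨e₂, he₂⟩ := ihz
    obtain ⟨g, hg1, hg2⟩ := pair_left hl e₁ e₂
    have hy' : s g y = y := by rw [← he₁, ← hmul, hg1]
    have hz' : s g z = z := by rw [← he₂, ← hmul, hg2]
    exact ⟨g, by rw [hadd, hy', hz']⟩
  | neg y _ ih =>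
    obtain ⟨e, he⟩ := ih
    have hneg : s e (-y) = - s e y :=
      (AddMonoidHom.mk' (s e) (hadd e)).map_neg y
    exact ⟨e, by rw [hneg, he]⟩

lemma exists_sunit_left_fin (s : A → X → X)
    (hadd : ∀ a x y, s a (x + y) = s a x + s a y)
    (hmul : ∀ a b x, s (a * b) x = s a (s b x))
    (hl : ∀ r : A, ∃ y, y * r = r)
    (hgen : AddSubgroup.closure {x : X | ∃ a x₀, x = s a x₀} = ⊤) :
    ∀ (n : ℕ) (x : Fin n → X), ∃ e, ∀ i, s e (x i) = x i := by
  intro n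
  induction n with
  | zero => exact fun x => ⟨0, fun i => i.elim0⟩
  | succ k ih =>
    intro x
    obtain ⟨e₁, he₁⟩ := ih (fun i => x i.castSucc)
    obtain ⟨e₂, he₂⟩ := exists_sunit_left s hadd hmul hl hgen (x (Fin.last k))
    obtain ⟨g, hg1, hg2⟩ := pair_left hl e₁ e₂
    refine ⟨g, fun i => ?_⟩
    refine Fin.lastCases ?_ ?_ i
    · rw [← he₂, ← hmul, hg2]
    · intro j
      have := he₁ j
      rw [← this, ← hmul, hg1]
end SUnit

/-- part of the proof of Proposition 6.2: for a Morita context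
with `s`-unital rings `R`, `R'`, surjective `τ`, `τ'`, `M'R = R'M' = M'` and
`MR' = RM = M`, the natural map `M' ⊗_R R → M'`, `m' ⊗ r ↦ m'·r`, is an
isomorphism — expressed by the universal property: every `R`-balanced
biadditive map `β : M' × R → T` factors uniquely through `(m', r) ↦ m'·r` —
and the maps `τ : M ⊗_{R'} M' → R`, `τ' : M' ⊗_R M → R'` are bijective —
surjectivity being the hypothesis, and injectivity expressed by: whenever
`Σᵢ τ(mᵢ ⊗ m'ᵢ) = 0`, the element `Σᵢ mᵢ ⊗ m'ᵢ` is zero, i.e. it is killed by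
every balanced biadditive map. -/
theorem morita_sunital_tensor (c : MoritaContext R R' M M')
    (hRl : ∀ r : R, ∃ y : R, y * r = r) (hRr : ∀ r : R, ∃ y : R, r * y = r)
    (hR'l : ∀ r' : R', ∃ y : R', y * r' = r') (hR'r : ∀ r' : R', ∃ y : R', r' * y = r')
    (hτ : AddSubgroup.closure {x : R | ∃ m m', x = c.p m m'} = ⊤)
    (hτ' : AddSubgroup.closure {x : R' | ∃ m' m, x = c.p' m' m} = ⊤)
    (hM'R : AddSubgroup.closure {x : M' | ∃ m' r, x = c.sMR' m' r} = ⊤)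
    (hR'M' : AddSubgroup.closure {x : M' | ∃ r' m', x = c.sRM' r' m'} = ⊤)
    (hMR' : AddSubgroup.closure {x : M | ∃ m r', x = c.sMR m r'} = ⊤)
    (hRM : AddSubgroup.closure {x : M | ∃ r m, x = c.sRM r m} = ⊤) :
    (∀ (T : Type) (_ : AddCommGroup T) (β : M' → R → T),
      (∀ a b r, β (a + b) r = β a r + β b r) →
      (∀ a r s, β a (r + s) = β a r + β a s) →
      (∀ a r s, β (c.sMR' a r) s = β a (r * s)) →
      ∃! φ : M' →+ T, ∀ a r, φ (c.sMR' a r) = β a r) ∧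
    (∀ (n : ℕ) (m : Fin n → M) (m' : Fin n → M'),
      (∑ i, c.p (m i) (m' i)) = 0 →
      ∀ (T : Type) (_ : AddCommGroup T) (β : M → M' → T),
        (∀ a b x, β (a + b) x = β a x + β b x) →
        (∀ a x y, β a (x + y) = β a x + β a y) →
        (∀ a r' x, β (c.sMR a r') x = β a (c.sRM' r' x)) →
        (∑ i, β (m i) (m' i)) = 0) ∧
    (∀ (n : ℕ) (m' : Fin n → M') (m : Fin n → M),
      (∑ i, c.p' (m' i) (m i)) = 0 →
      ∀ (T : Type) (_ : AddCommGroup T) (β : M' → M → T),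
        (∀ a b x, β (a + b) x = β a x + β b x) →
        (∀ a x y, β a (x + y) = β a x + β a y) →
        (∀ a r x, β (c.sMR' a r) x = β a (c.sRM r x)) →
        (∑ i, β (m' i) (m i)) = 0) := by
  refine ⟨?_, ?_, ?_⟩
  · -- Part 1: universal property of M' ⊗ R ≅ M'
    intro T instT β h1 h2 hbal
    have hu : ∀ m' : M', ∃ e, c.sMR' m' e = m' :=
      exists_sunit_right c.sMR' c.sMR'_add_left c.sMR'_mul hRr hM'R
    have hu2 : ∀ a b : M', ∃ e, c.sMR' a e = a ∧ c.sMR' b e = b := by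
      intro a b
      obtain ⟨e₁, he₁⟩ := hu a
      obtain ⟨e₂, he₂⟩ := hu b
      obtain ⟨g, hg1, hg2⟩ := pair_right hRr e₁ e₂
      exact ⟨g, by rw [← he₁, c.sMR'_mul, hg1], by rw [← he₂, c.sMR'_mul, hg2]⟩
    have hβ0 : ∀ r : R, β 0 r = 0 := fun r =>
      (AddMonoidHom.mk' (fun a => β a r) (fun a b => h1 a b r)).map_zero
    have key : ∀ (m' : M') (d : R), c.sMR' m' d = 0 → β m' d = 0 := by
      intro m' d hd
      obtain ⟨g, hg⟩ := hRr d
      rw [← hg, ← hbal, hd]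
      exact hβ0 g
    have wd : ∀ (m' : M') (e f : R), c.sMR' m' e = m' → c.sMR' m' f = m' →
        β m' e = β m' f := by
      intro m' e f he hf
      have hsub : c.sMR' m' (e - f) = 0 := by
        have h : c.sMR' m' (e - f) = c.sMR' m' e - c.sMR' m' f :=
          map_sub (AddMonoidHom.mk' (c.sMR' m') (c.sMR'_add_right m')) e f
        rw [h, he, hf, sub_self]
      have hβsub : β m' e - β m' f = β m' (e - f) :=
        (map_sub (AddMonoidHom.mk' (β m') (h2 m')) e f).symm
      exact sub_eq_zero.mp (hβsub.trans (key m' (e - f) hsub))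
    choose unit hunit using hu
    have hφadd : ∀ a b : M', β (a + b) (unit (a + b)) = β a (unit a) + β b (unit b) := by
      intro a b
      obtain ⟨e, hea, heb⟩ := hu2 a b
      have hab : c.sMR' (a + b) e = a + b := by rw [c.sMR'_add_left, hea, heb]
      rw [wd (a + b) (unit (a + b)) e (hunit _) hab, wd a (unit a) e (hunit a) hea,
        wd b (unit b) e (hunit b) heb, h1]
    have hprop : ∀ (a : M') (r : R), β (c.sMR' a r) (unit (c.sMR' a r)) = β a r := by
      intro a r
      obtain ⟨g, hg⟩ := hRr r
      have hx : c.sMR' (c.sMR' a r) g = c.sMR' a r := by rw [c.sMR'_mul, hg]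
      rw [wd _ _ g (hunit _) hx, hbal, hg]
    refine ⟨AddMonoidHom.mk' (fun m' => β m' (unit m')) hφadd, hprop, ?_⟩
    intro ψ hψ
    ext m'
    have hm : m' ∈ AddSubgroup.closure {x : M' | ∃ m'' r, x = c.sMR' m'' r} :=
      hM'R ▸ AddSubgroup.mem_top m'
    induction hm using AddSubgroup.closure_induction with
    | mem y hy =>
      obtain ⟨a, r, rfl⟩ := hy
      rw [hψ a r]
      exact (hprop a r).symm
    | zero => rw [map_zero ψ]; exact (hβ0 (unit 0)).symm
    | add y z _ _ ihy ihz => rw [map_add, map_add, ihy, ihz]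
    | neg y _ ih => rw [map_neg, map_neg, ih]
  · -- Part 2: injectivity of τ
    intro n m m' hsum T instT β h1 h2 hbal
    have hβ0l : ∀ x : M', β 0 x = 0 := fun x =>
      (AddMonoidHom.mk' (fun a => β a x) (fun a b => h1 a b x)).map_zero
    have hβ0r : ∀ a : M, β a 0 = 0 := fun a =>
      (AddMonoidHom.mk' (β a) (h2 a)).map_zero
    obtain ⟨e, he⟩ := exists_sunit_left_fin c.sRM c.sRM_add_right c.sRM_mul hRl hRM n m
    have key : ∀ r : R, ∑ i, β (c.sRM r (m i)) (m' i) = 0 := by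
      intro r
      have hr : r ∈ AddSubgroup.closure {x : R | ∃ a a', x = c.p a a'} :=
        hτ ▸ AddSubgroup.mem_top r
      induction hr using AddSubgroup.closure_induction with
      | mem y hy =>
        obtain ⟨a, a', rfl⟩ := hy
        have step : ∀ i : Fin n, β (c.sRM (c.p a a') (m i)) (m' i)
            = β a (c.sMR' a' (c.p (m i) (m' i))) := by
          intro i
          rw [c.assoc₁, hbal, c.assoc₂]
        rw [Finset.sum_congr rfl (fun i _ => step i)]
        have hcomp : ∀ x y : R, β a (c.sMR' a' (x + y))
            = β a (c.sMR' a' x) + β a (c.sMR' a' y) := by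
          intro x y; rw [c.sMR'_add_right, h2]
        have hsum2 : ∑ i, β a (c.sMR' a' (c.p (m i) (m' i)))
            = β a (c.sMR' a' (∑ i, c.p (m i) (m' i))) :=
          (map_sum (AddMonoidHom.mk' (fun x : R => β a (c.sMR' a' x)) hcomp)
            (fun i => c.p (m i) (m' i)) Finset.univ).symm
        have hz : c.sMR' a' (0 : R) = 0 :=
          (AddMonoidHom.mk' (c.sMR' a') (c.sMR'_add_right a')).map_zero
        rw [hsum2, hsum, hz, hβ0r]
      | zero =>
        have h0 : ∀ i : Fin n, c.sRM 0 (m i) = 0 := fun i =>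
          (AddMonoidHom.mk' (fun r => c.sRM r (m i))
            (fun r s => c.sRM_add_left r s (m i))).map_zero
        rw [Finset.sum_congr rfl (fun i _ => by rw [h0 i, hβ0l])]
        exact Finset.sum_const_zero
      | add y z _ _ ihy ihz =>
        have step : ∀ i : Fin n, β (c.sRM (y + z) (m i)) (m' i)
            = β (c.sRM y (m i)) (m' i) + β (c.sRM z (m i)) (m' i) := by
          intro i; rw [c.sRM_add_left, h1]
        rw [Finset.sum_congr rfl (fun i _ => step i), Finset.sum_add_distrib, ihy, ihz,
          add_zero]
      | neg y _ ih =>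
        have step : ∀ i : Fin n, β (c.sRM (-y) (m i)) (m' i)
            = - β (c.sRM y (m i)) (m' i) := by
          intro i
          have hneg : c.sRM (-y) (m i) = - c.sRM y (m i) :=
            (AddMonoidHom.mk' (fun r => c.sRM r (m i))
              (fun r s => c.sRM_add_left r s (m i))).map_neg y
          rw [hneg]
          exact (AddMonoidHom.mk' (fun a => β a (m' i))
            (fun a b => h1 a b (m' i))).map_neg _
        rw [Finset.sum_congr rfl (fun i _ => step i), Finset.sum_neg_distrib, ih, neg_zero]
    have hrw : ∑ i, β (m i) (m' i) = ∑ i, β (c.sRM e (m i)) (m' i) :=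
      Finset.sum_congr rfl (fun i _ => by rw [he i])
    rw [hrw]
    exact key e
  · -- Part 3: injectivity of τ'
    intro n m' m hsum T instT β h1 h2 hbal
    have hβ0l : ∀ x : M, β 0 x = 0 := fun x =>
      (AddMonoidHom.mk' (fun a => β a x) (fun a b => h1 a b x)).map_zero
    have hβ0r : ∀ a : M', β a 0 = 0 := fun a =>
      (AddMonoidHom.mk' (β a) (h2 a)).map_zero
    obtain ⟨e, he⟩ := exists_sunit_left_fin c.sRM' c.sRM'_add_right c.sRM'_mul hR'l hR'M' n m'
    have key : ∀ r' : R', ∑ i, β (c.sRM' r' (m' i)) (m i) = 0 := by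
      intro r'
      have hr : r' ∈ AddSubgroup.closure {x : R' | ∃ a' a, x = c.p' a' a} :=
        hτ' ▸ AddSubgroup.mem_top r'
      induction hr using AddSubgroup.closure_induction with
      | mem y hy =>
        obtain ⟨b', b, rfl⟩ := hy
        have step : ∀ i : Fin n, β (c.sRM' (c.p' b' b) (m' i)) (m i)
            = β b' (c.sMR b (c.p' (m' i) (m i))) := by
          intro i
          rw [c.assoc₂, hbal, c.assoc₁]
        rw [Finset.sum_congr rfl (fun i _ => step i)]
        have hcomp : ∀ x y : R', β b' (c.sMR b (x + y))
            = β b' (c.sMR b x) + β b' (c.sMR b y) := by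
          intro x y; rw [c.sMR_add_right, h2]
        have hsum2 : ∑ i, β b' (c.sMR b (c.p' (m' i) (m i)))
            = β b' (c.sMR b (∑ i, c.p' (m' i) (m i))) :=
          (map_sum (AddMonoidHom.mk' (fun x : R' => β b' (c.sMR b x)) hcomp)
            (fun i => c.p' (m' i) (m i)) Finset.univ).symm
        have hz : c.sMR b (0 : R') = 0 :=
          (AddMonoidHom.mk' (c.sMR b) (c.sMR_add_right b)).map_zero
        rw [hsum2, hsum, hz, hβ0r]
      | zero =>
        have h0 : ∀ i : Fin n, c.sRM' 0 (m' i) = 0 := fun i =>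
          (AddMonoidHom.mk' (fun r' => c.sRM' r' (m' i))
            (fun r' s' => c.sRM'_add_left r' s' (m' i))).map_zero
        rw [Finset.sum_congr rfl (fun i _ => by rw [h0 i, hβ0l])]
        exact Finset.sum_const_zero
      | add y z _ _ ihy ihz =>
        have step : ∀ i : Fin n, β (c.sRM' (y + z) (m' i)) (m i)
            = β (c.sRM' y (m' i)) (m i) + β (c.sRM' z (m' i)) (m i) := by
          intro i; rw [c.sRM'_add_left, h1]
        rw [Finset.sum_congr rfl (fun i _ => step i), Finset.sum_add_distrib, ihy, ihz,
          add_zero]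
      | neg y _ ih =>
        have step : ∀ i : Fin n, β (c.sRM' (-y) (m' i)) (m i)
            = - β (c.sRM' y (m' i)) (m i) := by
          intro i
          have hneg : c.sRM' (-y) (m' i) = - c.sRM' y (m' i) :=
            (AddMonoidHom.mk' (fun r' => c.sRM' r' (m' i))
              (fun r' s' => c.sRM'_add_left r' s' (m' i))).map_neg y
          rw [hneg]
          exact (AddMonoidHom.mk' (fun a => β a (m i))
            (fun a b => h1 a b (m i))).map_neg _
        rw [Finset.sum_congr rfl (fun i _ => step i), Finset.sum_neg_distrib, ih, neg_zero]
    have hrw : ∑ i, β (m' i) (m i) = ∑ i, β (c.sRM' e (m' i)) (m i) :=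
      Finset.sum_congr rfl (fun i _ => by rw [he i])
    rw [hrw]
    exact key e
end
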